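/- arXiv:2012.02249 — 3 statements merged into one kernel-verified Lean document; each statement's English description precedes it below -/
import Mathlib

section
/- Every finite graph with maximum degree O(1) on V vertices admits a weakly fundamental cycle basis in which each edge appears in at most O((log V)²) cycles of the basis. -/
/-- A multigraph on vertex type `V` is given by an edge type `E` together with an
endpoint map `ε : E → Sym2 V` (self-edges and multi-edges are allowed).
A simple cycle of length `n` is a cyclic sequence of `n` distinct vertices joined
by `n` distinct edges. -/
structure MCycle (V E : Type*) (ε : E → Sym2 V) where
  n : ℕ
  npos : 0 < n
  vtx : ℕ → V
  edg : ℕ → E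
  incid : ∀ i < n, ε (edg i) = s(vtx i, vtx ((i + 1) % n))
  vinj : ∀ i < n, ∀ j < n, vtx i = vtx j → i = j
  einj : ∀ i < n, ∀ j < n, edg i = edg j → i = j

/-- The degree of a vertex in a multigraph: a self-edge contributes `2`. -/
def mdeg {V E : Type*} [Fintype E] [DecidableEq V] (ε : E → Sym2 V) (x : V) : ℕ :=
  ∑ f : E, (if ε f = s(x, x) then 2 else if x ∈ ε f then 1 else 0)

/-- The edge `f` is used by the cycle `c`. -/
abbrev inCyc {V E : Type*} {ε : E → Sym2 V} (c : MCycle V E ε) (f : E) : Prop :=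
  ∃ i < c.n, c.edg i = f

/-- The `Z/2` chain (indicator of the edge set) of a simple cycle in a multigraph. -/
def mchain {V E : Type*} [DecidableEq E] {ε : E → Sym2 V} (c : MCycle V E ε) :
    E → ZMod 2 :=
  fun f => if inCyc c f then 1 else 0

/-- The cycle-space condition for a `Z/2` edge chain: its boundary vanishes at every
vertex (self-edges contribute `2 ≡ 0`). -/
def cycleCondM {V E : Type*} [Fintype E] [DecidableEq V] (ε : E → Sym2 V)
    (c : E → ZMod 2) : Prop :=
  ∀ x : V, (∑ f : E, if ε f = s(x, x) then 0 else if x ∈ ε f then c f else 0) = 0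

namespace Decon
set_option linter.unusedSectionVars false

open Finset Module

variable {V E : Type} [Fintype V] [Fintype E] [DecidableEq V] [DecidableEq E] {ε : E → Sym2 V}

/-- edge set of a cycle -/
def cycEdges (C : MCycle V E ε) : Finset E := (Finset.range C.n).image C.edg

lemma inCyc_iff_mem {C : MCycle V E ε} {f : E} : inCyc C f ↔ f ∈ cycEdges C := by
  simp only [cycEdges, mem_image, mem_range, inCyc]

lemma mchain_apply (C : MCycle V E ε) (f : E) :
    mchain C f = if f ∈ cycEdges C then 1 else 0 := by
  simp only [mchain, inCyc_iff_mem]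

lemma mchain_apply_of_mem {C : MCycle V E ε} {f : E} (h : f ∈ cycEdges C) :
    mchain C f = 1 := by rw [mchain_apply, if_pos h]

lemma mchain_apply_of_not_mem {C : MCycle V E ε} {f : E} (h : f ∉ cycEdges C) :
    mchain C f = 0 := by rw [mchain_apply, if_neg h]

/-- The cycle space of the sub-multigraph with edge set `S`. -/
def ZSp (ε : E → Sym2 V) (S : Finset E) : Submodule (ZMod 2) (E → ZMod 2) where
  carrier := {c | cycleCondM ε c ∧ ∀ f ∉ S, c f = 0}
  add_mem' := by
    rintro c d ⟨hc, hc'⟩ ⟨hd, hd'⟩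
    constructor
    · intro x
      have : (∑ f : E, if ε f = s(x, x) then 0 else if x ∈ ε f then (c + d) f else 0)
          = (∑ f : E, if ε f = s(x, x) then 0 else if x ∈ ε f then c f else 0)
          + (∑ f : E, if ε f = s(x, x) then 0 else if x ∈ ε f then d f else 0) := by
        rw [← Finset.sum_add_distrib]
        refine Finset.sum_congr rfl fun f _ => ?_
        split_ifs <;> simp
      rw [this, hc x, hd x, add_zero]
    · intro f hf; simp [Pi.add_apply, hc' f hf, hd' f hf]
  zero_mem' := by
    constructor
    · intro x
      rw [← Finset.sum_const_zero (s := (univ : Finset E))]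
      refine Finset.sum_congr rfl fun f _ => ?_
      split_ifs <;> simp
    · intro f _; rfl
  smul_mem' := by
    rintro r c ⟨hc, hc'⟩
    constructor
    · intro x
      have : (∑ f : E, if ε f = s(x, x) then 0 else if x ∈ ε f then (r • c) f else 0)
          = r * (∑ f : E, if ε f = s(x, x) then 0 else if x ∈ ε f then c f else 0) := by
        rw [Finset.mul_sum]
        refine Finset.sum_congr rfl fun f _ => ?_
        split_ifs <;> simp [mul_comm]
      rw [this, hc x, mul_zero]
    · intro f hf; simp [Pi.smul_apply, hc' f hf]

lemma mem_ZSp {S : Finset E} {c : E → ZMod 2} :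
    c ∈ ZSp ε S ↔ cycleCondM ε c ∧ ∀ f ∉ S, c f = 0 := Iff.rfl

lemma ZSp_mono {S T : Finset E} (h : S ⊆ T) : ZSp ε S ≤ ZSp ε T := by
  rintro c ⟨hc, hc'⟩
  exact ⟨hc, fun f hf => hc' f (fun hfS => hf (h hfS))⟩

noncomputable def mu (ε : E → Sym2 V) (S : Finset E) : ℕ := finrank (ZMod 2) (ZSp ε S)

lemma mem_ZSp_sdiff {S A : Finset E} {c : E → ZMod 2} :
    c ∈ ZSp ε (S \ A) ↔ c ∈ ZSp ε S ∧ ∀ a ∈ A, c a = 0 := by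
  constructor
  · rintro ⟨hc, hc'⟩
    refine ⟨⟨hc, fun f hf => hc' f (fun h => hf (mem_sdiff.1 h).1)⟩, fun a ha => hc' a ?_⟩
    simp [mem_sdiff, ha]
  · rintro ⟨⟨hc, hc'⟩, h0⟩
    refine ⟨hc, fun f hf => ?_⟩
    rw [mem_sdiff] at hf
    push_neg at hf
    by_cases hfS : f ∈ S
    · exact h0 f (hf hfS)
    · exact hc' f hfS

/-- restriction of the cycle space to the coordinates in `A` -/
noncomputable def resMap (ε : E → Sym2 V) (S A : Finset E) :
    ZSp ε S →ₗ[ZMod 2] ({ x // x ∈ A } → ZMod 2) :=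
  (LinearMap.funLeft (ZMod 2) (ZMod 2) (fun x : { x // x ∈ A } => (x : E))).comp (ZSp ε S).subtype

lemma ker_resMap (S A : Finset E) :
    LinearMap.ker (resMap ε S A) = Submodule.comap (ZSp ε S).subtype (ZSp ε (S \ A)) := by
  ext c
  obtain ⟨c, hc⟩ := c
  simp only [LinearMap.mem_ker, Submodule.mem_comap, Submodule.subtype_apply]
  rw [mem_ZSp_sdiff]
  constructor
  · intro h
    refine ⟨hc, fun a ha => ?_⟩
    have := congrFun h ⟨a, ha⟩
    simpa [resMap, LinearMap.funLeft] using this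
  · rintro ⟨-, h0⟩
    funext a
    obtain ⟨a, ha⟩ := a
    simpa [resMap, LinearMap.funLeft] using h0 a ha

lemma mu_sdiff_add_finrank (S A : Finset E) :
    mu ε (S \ A) + finrank (ZMod 2) (LinearMap.range (resMap ε S A)) = mu ε S := by
  have h1 := LinearMap.finrank_range_add_finrank_ker (resMap ε S A)
  rw [ker_resMap] at h1
  have h2 : finrank (ZMod 2)
      (Submodule.comap (ZSp ε S).subtype (ZSp ε (S \ A))) = mu ε (S \ A) := by
    have hle : ZSp ε (S \ A) ≤ ZSp ε S := ZSp_mono (sdiff_subset)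
    exact LinearEquiv.finrank_eq (Submodule.comapSubtypeEquivOfLe hle)
  rw [h2] at h1
  unfold mu at h1 ⊢
  omega

lemma ZSp_eq_bot_of_mu_zero {S : Finset E} (h : mu ε S = 0) : ZSp ε S = ⊥ :=
  Submodule.finrank_eq_zero.1 h



/-! ### index arithmetic -/

def prevIdx (n i : ℕ) : ℕ := (i + (n - 1)) % n

lemma succ_mod_lt {n : ℕ} (hn : 0 < n) (i : ℕ) : (i + 1) % n < n := Nat.mod_lt _ hn

lemma prevIdx_lt {n : ℕ} (hn : 0 < n) (i : ℕ) : prevIdx n i < n := Nat.mod_lt _ hn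

lemma succ_prevIdx {n i : ℕ} (hn : 0 < n) (hi : i < n) : (prevIdx n i + 1) % n = i := by
  unfold prevIdx
  rw [Nat.mod_add_mod]
  have h : i + (n - 1) + 1 = i + n := by omega
  rw [h, Nat.add_mod_right, Nat.mod_eq_of_lt hi]

lemma succ_mod_ne {n i : ℕ} (hn : 2 ≤ n) (hi : i < n) : (i + 1) % n ≠ i := by
  rcases Nat.lt_or_ge (i + 1) n with h | h
  · rw [Nat.mod_eq_of_lt h]; omega
  · have h1 : i + 1 = n := by omega
    rw [h1, Nat.mod_self]; omega

lemma prevIdx_ne {n i : ℕ} (hn : 2 ≤ n) (hi : i < n) : prevIdx n i ≠ i := by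
  intro h
  have h2 := succ_prevIdx (by omega : 0 < n) hi
  rw [h] at h2
  exact succ_mod_ne hn hi h2

lemma succ_mod_inj {n i j : ℕ} (hi : i < n) (hj : j < n)
    (h : (i + 1) % n = (j + 1) % n) : i = j := by
  rcases Nat.lt_or_ge (i + 1) n with h1 | h1 <;> rcases Nat.lt_or_ge (j + 1) n with h2 | h2
  · rw [Nat.mod_eq_of_lt h1, Nat.mod_eq_of_lt h2] at h; omega
  · have : j + 1 = n := by omega
    rw [Nat.mod_eq_of_lt h1, this, Nat.mod_self] at h; omega
  · have : i + 1 = n := by omega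
    rw [Nat.mod_eq_of_lt h2, this, Nat.mod_self] at h; omega
  · omega

/-! ### cycles give cycle-space elements -/

lemma edg_mem_cycEdges (C : MCycle V E ε) {i : ℕ} (hi : i < C.n) :
    C.edg i ∈ cycEdges C := mem_image.2 ⟨i, mem_range.2 hi, rfl⟩

lemma cycleCondM_mchain (C : MCycle V E ε) : cycleCondM ε (mchain C) := by
  intro x
  by_cases hx : ∃ i < C.n, C.vtx i = x
  · obtain ⟨i₀, hi₀, hvx⟩ := hx
    rcases Nat.lt_or_ge C.n 2 with hn | hn
    · -- n = 1 : single loop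
      have hn1 : C.n = 1 := by have := C.npos; omega
      refine Finset.sum_eq_zero fun f _ => ?_
      by_cases hf : f ∈ cycEdges C
      · obtain ⟨j, hj, rfl⟩ := by
          simpa only [cycEdges, mem_image, mem_range] using hf
        have hj0 : j = 0 := by omega
        have : ε (C.edg j) = s(x, x) := by
          have h1 := C.incid j (by omega)
          rw [hj0] at *
          simpa [hn1, ← hvx, show i₀ = 0 by omega] using h1
        rw [if_pos this]
      · split_ifs with h1 h2
        · rfl
        · exact mchain_apply_of_not_mem hf
        · rfl
    · -- n ≥ 2
      have hnpos : 0 < C.n := C.npos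
      set a := C.edg (prevIdx C.n i₀) with ha
      set b := C.edg i₀ with hb
      have hpl : prevIdx C.n i₀ < C.n := prevIdx_lt hnpos i₀
      have hab : a ≠ b := by
        intro h
        exact prevIdx_ne hn hi₀ (C.einj _ hpl _ hi₀ h)
      have hεa : ε a = s(C.vtx (prevIdx C.n i₀), x) := by
        rw [ha, C.incid _ hpl, succ_prevIdx hnpos hi₀, hvx]
      have hεb : ε b = s(x, C.vtx ((i₀ + 1) % C.n)) := by
        rw [hb, C.incid _ hi₀, hvx]
      have hva : C.vtx (prevIdx C.n i₀) ≠ x := by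
        intro h
        rw [← hvx] at h
        exact prevIdx_ne hn hi₀ (C.vinj _ hpl _ hi₀ h)
      have hvb : C.vtx ((i₀ + 1) % C.n) ≠ x := by
        intro h
        rw [← hvx] at h
        exact succ_mod_ne hn hi₀ (C.vinj _ (succ_mod_lt hnpos i₀) _ hi₀ h)
      have term_eq : ∀ f : E,
          (if ε f = s(x, x) then 0 else if x ∈ ε f then mchain C f else 0)
          = if f = a ∨ f = b then 1 else 0 := by
        intro f
        by_cases hf : f = a ∨ f = b
        · rw [if_pos hf]
          rcases hf with rfl | rfl
          · rw [if_neg, if_pos, mchain_apply_of_mem (edg_mem_cycEdges C hpl)]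
            · rw [hεa]; exact Sym2.mem_mk_right _ _
            · rw [hεa]
              intro h
              rw [Sym2.eq_iff] at h
              tauto
          · rw [if_neg, if_pos, mchain_apply_of_mem (edg_mem_cycEdges C hi₀)]
            · rw [hεb]; exact Sym2.mem_mk_left _ _
            · rw [hεb]
              intro h
              rw [Sym2.eq_iff] at h
              tauto
        · rw [if_neg hf]
          push_neg at hf
          by_cases h1 : ε f = s(x, x)
          · rw [if_pos h1]
          · rw [if_neg h1]
            by_cases h2 : x ∈ ε f
            · rw [if_pos h2]
              by_cases hfc : f ∈ cycEdges C
              · exfalso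
                obtain ⟨j, hj, rfl⟩ := by
                  simpa only [cycEdges, mem_image, mem_range] using hfc
                have hj' := C.incid j hj
                rw [hj', Sym2.mem_iff] at h2
                rcases h2 with h2 | h2
                · rw [← hvx] at h2
                  exact hf.2 (by rw [hb, C.vinj _ hj _ hi₀ h2.symm])
                · rw [← hvx] at h2
                  have heq := C.vinj _ (succ_mod_lt hnpos j) _ hi₀ h2.symm
                  have hjp : j = prevIdx C.n i₀ := by
                    refine succ_mod_inj hj hpl ?_
                    rw [heq, succ_prevIdx hnpos hi₀]
                  exact hf.1 (by rw [ha, hjp])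
              · exact mchain_apply_of_not_mem hfc
            · rw [if_neg h2]
      calc (∑ f : E, if ε f = s(x, x) then 0 else if x ∈ ε f then mchain C f else 0)
          = ∑ f : E, if f = a ∨ f = b then (1 : ZMod 2) else 0 :=
            Finset.sum_congr rfl fun f _ => term_eq f
        _ = (if a = a ∨ a = b then (1 : ZMod 2) else 0)
            + (if b = a ∨ b = b then (1 : ZMod 2) else 0) := by
            refine Finset.sum_eq_add_of_mem a b (mem_univ a) (mem_univ b) hab ?_
            intro c _ hc
            rw [if_neg (by tauto)]
        _ = 0 := by
            rw [if_pos (Or.inl rfl), if_pos (Or.inr rfl)]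
            decide
  · push_neg at hx
    refine Finset.sum_eq_zero fun f _ => ?_
    split_ifs with h1 h2
    · rfl
    · by_cases hfc : f ∈ cycEdges C
      · exfalso
        obtain ⟨j, hj, rfl⟩ := by
          simpa only [cycEdges, mem_image, mem_range] using hfc
        have hj' := C.incid j hj
        rw [hj', Sym2.mem_iff] at h2
        rcases h2 with h2 | h2
        · exact hx j hj h2.symm
        · exact hx _ (succ_mod_lt C.npos j) h2.symm
      · exact mchain_apply_of_not_mem hfc
    · rfl

lemma mchain_mem_ZSp {C : MCycle V E ε} {S : Finset E} (h : cycEdges C ⊆ S) :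
    mchain C ∈ ZSp ε S := by
  refine ⟨cycleCondM_mchain C, fun f hf => ?_⟩
  exact mchain_apply_of_not_mem (fun hc => hf (h hc))

lemma mchain_ne_zero (C : MCycle V E ε) : mchain C ≠ 0 := by
  intro h
  have := congrFun h (C.edg 0)
  rw [mchain_apply_of_mem (edg_mem_cycEdges C C.npos)] at this
  simp at this


/-! ### simple paths -/

structure SPath (ε : E → Sym2 V) : Type where
  n : ℕ
  vtx : ℕ → V
  edg : ℕ → E
  incid : ∀ i < n, ε (edg i) = s(vtx i, vtx (i + 1))
  vinj : ∀ i ≤ n, ∀ j ≤ n, vtx i = vtx j → i = j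

def pEdges (p : SPath ε) : Finset E := (range p.n).image p.edg

lemma SPath.edg_inj (p : SPath ε) {i j : ℕ} (hi : i < p.n) (hj : j < p.n)
    (h : p.edg i = p.edg j) : i = j := by
  have h3 : s(p.vtx i, p.vtx (i + 1)) = s(p.vtx j, p.vtx (j + 1)) := by
    rw [← p.incid i hi, ← p.incid j hj, h]
  rw [Sym2.eq_iff] at h3
  rcases h3 with ⟨h4, -⟩ | ⟨h4, h5⟩
  · exact p.vinj _ (le_of_lt hi) _ (le_of_lt hj) h4
  · have := p.vinj _ (le_of_lt hi) _ hj h4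
    have := p.vinj _ hi _ (le_of_lt hj) h5
    omega

lemma SPath.card_bound (p : SPath ε) : p.n + 1 ≤ Fintype.card V := by
  have : Function.Injective (fun i : Fin (p.n + 1) => p.vtx i) := by
    intro i j h
    exact Fin.ext (p.vinj _ (Nat.lt_succ_iff.1 i.isLt) _ (Nat.lt_succ_iff.1 j.isLt) h)
  simpa using Fintype.card_le_of_injective _ this

/-- close a path into a cycle using a chord `e'` from the endpoint to `p.vtx j` -/
def closeCyc (p : SPath ε) (j : ℕ) (e' : E) (hj : j ≤ p.n)
    (he : ε e' = s(p.vtx p.n, p.vtx j))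
    (hne : ∀ i, j ≤ i → i < p.n → e' ≠ p.edg i) : MCycle V E ε where
  n := p.n - j + 1
  npos := Nat.succ_pos _
  vtx := fun k => p.vtx (j + k)
  edg := fun k => if k = p.n - j then e' else p.edg (j + k)
  incid := by
    intro k hk
    by_cases hlast : k = p.n - j
    · subst hlast
      rw [if_pos rfl, Nat.mod_self, he]
      have h1 : j + (p.n - j) = p.n := by omega
      rw [h1, Nat.add_zero]
    · have hk' : k < p.n - j := by omega
      rw [if_neg hlast, Nat.mod_eq_of_lt (by omega : k + 1 < p.n - j + 1)]
      have := p.incid (j + k) (by omega)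
      rw [this]
      have h2 : j + k + 1 = j + (k + 1) := by omega
      rw [h2]
  vinj := by
    intro i hi j' hj' h
    have := p.vinj (j + i) (by omega) (j + j') (by omega) h
    omega
  einj := by
    intro i hi j' hj' h
    by_cases h1 : i = p.n - j <;> by_cases h2 : j' = p.n - j
    · omega
    · rw [if_pos h1, if_neg h2] at h
      exact absurd h (hne _ (by omega) (by omega))
    · rw [if_neg h1, if_pos h2] at h
      exact absurd h.symm (hne _ (by omega) (by omega))
    · rw [if_neg h1, if_neg h2] at h
      have := p.edg_inj (by omega : j + i < p.n) (by omega : j + j' < p.n) h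
      omega

lemma closeCyc_edges (p : SPath ε) (j : ℕ) (e' : E) (hj : j ≤ p.n)
    (he : ε e' = s(p.vtx p.n, p.vtx j))
    (hne : ∀ i, j ≤ i → i < p.n → e' ≠ p.edg i) :
    cycEdges (closeCyc p j e' hj he hne) ⊆ insert e' (pEdges p) := by
  intro f hf
  obtain ⟨k, hk, rfl⟩ := by
    simpa only [cycEdges, mem_image, mem_range] using hf
  dsimp only [closeCyc] at hk
  by_cases h1 : k = p.n - j
  · rw [mem_insert]
    left
    dsimp only [closeCyc]
    rw [if_pos h1]
  · rw [mem_insert]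
    right
    dsimp only [closeCyc]
    rw [if_neg h1]
    exact mem_image.2 ⟨j + k, mem_range.2 (by omega), rfl⟩

/-- extend a path by one edge to a fresh vertex -/
def SPath.extend (p : SPath ε) (e : E) (y : V) (he : ε e = s(p.vtx p.n, y))
    (hy : ∀ i ≤ p.n, p.vtx i ≠ y) : SPath ε where
  n := p.n + 1
  vtx := fun i => if i = p.n + 1 then y else p.vtx i
  edg := fun i => if i = p.n then e else p.edg i
  incid := by
    intro i hi
    by_cases hl : i = p.n
    · subst hl
      rw [if_pos rfl, if_neg (by omega), if_pos rfl, he]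
    · have hi' : i < p.n := by omega
      rw [if_neg hl, if_neg (by omega), if_neg (by omega)]
      exact p.incid i hi'
  vinj := by
    intro i hi j hj h
    by_cases h1 : i = p.n + 1 <;> by_cases h2 : j = p.n + 1
    · omega
    · rw [if_pos h1, if_neg h2] at h
      exact absurd h.symm (hy j (by omega))
    · rw [if_neg h1, if_pos h2] at h
      exact absurd h (hy i (by omega))
    · rw [if_neg h1, if_neg h2] at h
      have := p.vinj i (by omega) j (by omega) h
      omega

/-- a single-edge path -/
def SPath.single (a b : V) (f : E) (hf : ε f = s(a, b)) (hab : a ≠ b) : SPath ε where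
  n := 1
  vtx := fun i => if i = 0 then a else b
  edg := fun _ => f
  incid := by
    intro i hi
    have : i = 0 := by omega
    subst this
    simpa using hf
  vinj := by
    intro i hi j hj h
    interval_cases i <;> interval_cases j <;> simp_all

/-! ### extraction of cycles from cycle-space chains -/

lemma sym2_rep (z : Sym2 V) : ∃ a b, z = s(a, b) := by
  induction z using Sym2.ind with
  | _ a b => exact ⟨a, b, rfl⟩

lemma zmod2_ne_zero {a : ZMod 2} (h : a ≠ 0) : a = 1 := by
  revert h; revert a; decide

def incSet (ε : E → Sym2 V) (c : E → ZMod 2) (x : V) : Finset E :=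
  univ.filter (fun f => c f ≠ 0 ∧ x ∈ ε f ∧ ε f ≠ s(x, x))

lemma incSet_card_even {c : E → ZMod 2} (hcyc : cycleCondM ε c) (x : V) :
    (incSet ε c x).card % 2 = 0 := by
  have h1 : ((incSet ε c x).card : ZMod 2) = 0 := by
    have h2 : (∑ f : E, if ε f = s(x, x) then 0 else if x ∈ ε f then c f else 0)
        = ∑ f : E, (if f ∈ incSet ε c x then (1 : ZMod 2) else 0) := by
      refine Finset.sum_congr rfl fun f _ => ?_
      by_cases hd : ε f = s(x, x)
      · rw [if_pos hd, if_neg]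
        simp only [incSet, mem_filter]
        tauto
      · rw [if_neg hd]
        by_cases hm : x ∈ ε f
        · rw [if_pos hm]
          by_cases hc0 : c f = 0
          · rw [hc0, if_neg]
            simp only [incSet, mem_filter]
            tauto
          · rw [zmod2_ne_zero hc0, if_pos]
            simp only [incSet, mem_filter]
            exact ⟨mem_univ f, hc0, hm, hd⟩
        · rw [if_neg hm, if_neg]
          simp only [incSet, mem_filter]
          tauto
    rw [hcyc x] at h2
    rw [Finset.sum_ite_mem, Finset.univ_inter, Finset.sum_const, nsmul_eq_mul, mul_one] at h2
    exact h2.symm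
  have := (ZMod.natCast_eq_zero_iff _ 2).1 h1
  omega

lemma incSet_second {c : E → ZMod 2} (hcyc : cycleCondM ε c) {x : V} {e : E}
    (he : e ∈ incSet ε c x) : ∃ e' ∈ incSet ε c x, e' ≠ e := by
  have h1 := incSet_card_even (ε := ε) hcyc x
  have h2 : 0 < (incSet ε c x).card := Finset.card_pos.2 ⟨e, he⟩
  have h3 : 1 < (incSet ε c x).card := by omega
  obtain ⟨e', he', hne⟩ := Finset.exists_mem_ne h3 e
  exact ⟨e', he', hne⟩

lemma walk_step {c : E → ZMod 2} (hcyc : cycleCondM ε c)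
    (hnl : ∀ f (x : V), c f ≠ 0 → ε f ≠ s(x, x))
    (p : SPath ε) (hp1 : 1 ≤ p.n) (hp2 : ∀ i < p.n, c (p.edg i) ≠ 0) :
    (∃ C : MCycle V E ε, ∀ f ∈ cycEdges C, c f ≠ 0) ∨
    (∃ p' : SPath ε, p'.n = p.n + 1 ∧ (∀ i < p'.n, c (p'.edg i) ≠ 0)) := by
  set x := p.vtx p.n with hx
  have hιe : ε (p.edg (p.n - 1)) = s(p.vtx (p.n - 1), x) := by
    have h0 : p.n - 1 + 1 = p.n := by omega
    have h1 := p.incid (p.n - 1) (by omega)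
    rw [h1, h0, hx]
  have he : p.edg (p.n - 1) ∈ incSet ε c x := by
    simp only [incSet, mem_filter]
    refine ⟨mem_univ _, hp2 _ (by omega), ?_, hnl _ _ (hp2 _ (by omega))⟩
    rw [hιe]
    exact Sym2.mem_mk_right _ _
  obtain ⟨e', he', hne⟩ := incSet_second hcyc he
  simp only [incSet, mem_filter] at he'
  obtain ⟨-, hc', hxe', hnl'⟩ := he'
  obtain ⟨y, hy⟩ := (Sym2.mem_iff_exists).1 hxe'
  have hyx : y ≠ x := by
    intro h
    rw [h] at hy
    exact hnl' hy
  have hepath : ∀ i, i < p.n → e' ≠ p.edg i := by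
    intro i hi heq
    have h2 := p.incid i hi
    rw [← heq, hy, Sym2.eq_iff] at h2
    rcases h2 with ⟨h3, h4⟩ | ⟨h3, h4⟩
    · have h5 : p.vtx i = p.vtx p.n := by rw [← h3, hx]
      have := p.vinj i (le_of_lt hi) p.n le_rfl h5
      omega
    · have h5 : p.vtx (i + 1) = p.vtx p.n := by rw [← h3, hx]
      have h6 := p.vinj (i + 1) hi p.n le_rfl h5
      refine hne ?_
      rw [heq]
      congr 1
      omega
  by_cases hmem : ∃ j ≤ p.n, p.vtx j = y
  · obtain ⟨j, hj, hvj⟩ := hmem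
    have hjn : j < p.n := by
      rcases Nat.lt_or_ge j p.n with h | h
      · exact h
      · exfalso
        have : j = p.n := by omega
        subst this
        exact hyx (hvj.symm ▸ rfl)
    left
    have he2 : ε e' = s(p.vtx p.n, p.vtx j) := by rw [hy, hvj, Sym2.eq_swap]
    refine ⟨closeCyc p j e' (le_of_lt hjn) he2 (fun i h1 h2 => hepath i h2), ?_⟩
    intro f hf
    have := closeCyc_edges p j e' (le_of_lt hjn) he2 (fun i h1 h2 => hepath i h2) hf
    rcases Finset.mem_insert.1 this with rfl | hfp
    · exact hc'
    · obtain ⟨i, hi, rfl⟩ := by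
        simpa only [pEdges, mem_image, mem_range] using hfp
      exact hp2 i hi
  · push_neg at hmem
    right
    refine ⟨p.extend e' y (by rw [hy]) hmem, rfl, ?_⟩
    intro i hi
    simp only [SPath.extend] at hi ⊢
    by_cases h1 : i = p.n
    · rw [if_pos h1]; exact hc'
    · rw [if_neg h1]; exact hp2 i (by omega)

lemma walk_down {c : E → ZMod 2} (hcyc : cycleCondM ε c)
    (hnl : ∀ f (x : V), c f ≠ 0 → ε f ≠ s(x, x)) :
    ∀ (k : ℕ) (p : SPath ε), 1 ≤ p.n → (∀ i < p.n, c (p.edg i) ≠ 0) →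
      Fintype.card V ≤ p.n + 1 + k →
      ∃ C : MCycle V E ε, ∀ f ∈ cycEdges C, c f ≠ 0 := by
  intro k
  induction k with
  | zero =>
    intro p hp1 hp2 hcard
    rcases walk_step hcyc hnl p hp1 hp2 with h | ⟨p', hp'n, -⟩
    · exact h
    · exfalso
      have := p'.card_bound
      omega
  | succ k ih =>
    intro p hp1 hp2 hcard
    rcases walk_step hcyc hnl p hp1 hp2 with h | ⟨p', hp'n, hp'2⟩
    · exact h
    · exact ih p' (by omega) hp'2 (by omega)

/-- extraction: a nonzero cycle-space chain contains a simple cycle. -/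
lemma exists_cycle_of_chain {c : E → ZMod 2} (hcyc : cycleCondM ε c) (hne : c ≠ 0) :
    ∃ C : MCycle V E ε, ∀ f ∈ cycEdges C, c f ≠ 0 := by
  by_cases hloop : ∃ f, ∃ x : V, c f ≠ 0 ∧ ε f = s(x, x)
  · obtain ⟨f, x, hcf, hεf⟩ := hloop
    refine ⟨⟨1, one_pos, fun _ => x, fun _ => f, ?_, ?_, ?_⟩, ?_⟩
    · intro i hi
      simpa using hεf
    · intro i hi j hj _
      omega
    · intro i hi j hj _
      omega
    · intro g hg
      obtain ⟨i, hi, rfl⟩ := by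
        simpa only [cycEdges, mem_image, mem_range] using hg
      exact hcf
  · push_neg at hloop
    have hnl : ∀ f (x : V), c f ≠ 0 → ε f ≠ s(x, x) := fun f x h => hloop f x h
    obtain ⟨f₀, hf₀⟩ : ∃ f₀, c f₀ ≠ 0 := by
      by_contra h
      push_neg at h
      exact hne (funext fun f => h f)
    obtain ⟨a, b, hab⟩ := sym2_rep (ε f₀)
    have hanb : a ≠ b := by
      intro h
      rw [h] at hab
      exact hnl f₀ b hf₀ hab
    set p := SPath.single a b f₀ hab hanb with hp
    refine walk_down hcyc hnl (Fintype.card V) p le_rfl ?_ (by omega)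
    intro i hi
    have : i = 0 := by
      simp only [hp, SPath.single] at hi
      omega
    subst this
    exact hf₀

/-- extraction through a given edge -/
lemma exists_cycle_through {c : E → ZMod 2} (hcyc : cycleCondM ε c) {f : E} (hf : c f ≠ 0) :
    ∃ C : MCycle V E ε, f ∈ cycEdges C ∧ ∀ g ∈ cycEdges C, c g ≠ 0 := by
  set N := (univ.filter (fun g => c g ≠ 0)).card with hN
  clear_value N
  induction N using Nat.strong_induction_on generalizing c with
  | _ N ih =>
  subst hN
  have hne : c ≠ 0 := by
    intro h
    rw [h] at hf
    exact hf rfl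
  obtain ⟨C, hC⟩ := exists_cycle_of_chain hcyc hne
  by_cases hfC : f ∈ cycEdges C
  · exact ⟨C, hfC, hC⟩
  · set c' := c + mchain C with hc'
    have hcyc' : cycleCondM ε c' := by
      have h1 : c ∈ ZSp ε univ := ⟨hcyc, fun g hg => absurd (mem_univ g) hg⟩
      have h2 : mchain C ∈ ZSp ε univ := mchain_mem_ZSp (fun g _ => mem_univ g)
      exact ((ZSp ε univ).add_mem h1 h2).1
    have hval : ∀ g, c' g = if g ∈ cycEdges C then 0 else c g := by
      intro g
      by_cases hg : g ∈ cycEdges C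
      · rw [if_pos hg]
        have h1 : c g = 1 := zmod2_ne_zero (hC g hg)
        have h2 : mchain C g = 1 := mchain_apply_of_mem hg
        simp only [hc', Pi.add_apply, h1, h2]
        decide
      · rw [if_neg hg]
        simp only [hc', Pi.add_apply, mchain_apply_of_not_mem hg, add_zero]
    have hsub : (univ.filter (fun g => c' g ≠ 0)) ⊂ (univ.filter (fun g => c g ≠ 0)) := by
      constructor
      · intro g hg
        rw [mem_filter] at *
        refine ⟨mem_univ g, ?_⟩
        have := hg.2
        rw [hval g] at this
        by_cases h2 : g ∈ cycEdges C
        · rw [if_pos h2] at this; exact absurd rfl this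
        · rw [if_neg h2] at this; exact this
      · intro hsup
        have h0 : C.edg 0 ∈ univ.filter (fun g => c g ≠ 0) := by
          rw [mem_filter]
          exact ⟨mem_univ _, hC _ (edg_mem_cycEdges C C.npos)⟩
        have h1 := hsup h0
        rw [mem_filter, hval] at h1
        rw [if_pos (edg_mem_cycEdges C C.npos)] at h1
        exact h1.2 rfl
    have hcard : (univ.filter (fun g => c' g ≠ 0)).card < (univ.filter (fun g => c g ≠ 0)).card :=
      Finset.card_lt_card hsub
    have hf' : c' f ≠ 0 := by
      rw [hval, if_neg hfC]
      exact hf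
    obtain ⟨C', hC'1, hC'2⟩ := ih _ hcard hcyc' hf' rfl
    refine ⟨C', hC'1, fun g hg => ?_⟩
    have := hC'2 g hg
    rw [hval, ] at this
    by_cases h2 : g ∈ cycEdges C
    · rw [if_pos h2] at this; exact absurd rfl this
    · rw [if_neg h2] at this; exact this


/-! ### cyclic part and branch degrees -/

noncomputable def Ypart (ε : E → Sym2 V) (S : Finset E) : Finset E := by
  classical
  exact S.filter (fun e => ∃ C : MCycle V E ε, cycEdges C ⊆ S ∧ e ∈ cycEdges C)

lemma mem_Ypart {e : E} {S : Finset E} :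
    e ∈ Ypart ε S ↔ e ∈ S ∧ ∃ C : MCycle V E ε, cycEdges C ⊆ S ∧ e ∈ cycEdges C := by
  simp [Ypart]

noncomputable def wdeg (ε : E → Sym2 V) (T : Finset E) (x : V) : ℕ :=
  ∑ f ∈ T, (if ε f = s(x, x) then 2 else if x ∈ ε f then 1 else 0)

noncomputable def ydeg (ε : E → Sym2 V) (S : Finset E) (x : V) : ℕ := wdeg ε (Ypart ε S) x

/-- a chain in the cycle space is supported on the cyclic part -/
lemma chain_supp_Ypart {S : Finset E} {c : E → ZMod 2} (hc : c ∈ ZSp ε S) {f : E}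
    (hf : c f ≠ 0) : f ∈ Ypart ε S := by
  obtain ⟨C, hfC, hCs⟩ := exists_cycle_through hc.1 hf
  refine mem_Ypart.2 ⟨?_, C, fun g hg => ?_, hfC⟩
  · by_contra h
    exact hf (hc.2 f h)
  · by_contra h
    exact hCs g hg (hc.2 g h)

lemma contrib_pos {x : V} {f : E} (h : x ∈ ε f) :
    1 ≤ (if ε f = s(x, x) then 2 else if x ∈ ε f then 1 else 0) := by
  split_ifs with h1 h2 <;> omega

lemma ypart_two {S : Finset E} {x : V} {a b : E} (hyd : ydeg ε S x = 2)
    (ha : a ∈ Ypart ε S) (hb : b ∈ Ypart ε S) (hab : a ≠ b)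
    (hxa : x ∈ ε a) (hxb : x ∈ ε b) :
    ∀ g ∈ Ypart ε S, x ∈ ε g → g = a ∨ g = b := by
  intro g hg hxg
  by_contra hgab
  push_neg at hgab
  set T : Finset E := insert g {a, b} with hT
  have hTsub : T ⊆ Ypart ε S := by
    intro u hu
    rw [hT, mem_insert, mem_insert, mem_singleton] at hu
    rcases hu with rfl | rfl | rfl <;> assumption
  have hcard : T.card = 3 := by
    rw [hT, card_insert_of_notMem, card_insert_of_notMem, card_singleton]
    · simpa using hab
    · simp only [mem_insert, mem_singleton]
      tauto
  have h1 : ∀ u ∈ T, 1 ≤ (if ε u = s(x, x) then 2 else if x ∈ ε u then 1 else 0) := by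
    intro u hu
    rw [hT, mem_insert, mem_insert, mem_singleton] at hu
    rcases hu with rfl | rfl | rfl <;> exact contrib_pos (by assumption)
  have h2 : T.card ≤ ∑ u ∈ T, (if ε u = s(x, x) then 2 else if x ∈ ε u then 1 else 0) := by
    calc T.card = ∑ _u ∈ T, 1 := by rw [Finset.sum_const, smul_eq_mul, mul_one]
      _ ≤ _ := Finset.sum_le_sum h1
  have h3 : (∑ u ∈ T, (if ε u = s(x, x) then 2 else if x ∈ ε u then 1 else 0)) ≤ ydeg ε S x :=
    Finset.sum_le_sum_of_subset hTsub
  rw [hyd] at h3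
  omega

lemma edg_mem_Ypart {S : Finset E} {C : MCycle V E ε} (hC : cycEdges C ⊆ S) {i : ℕ}
    (hi : i < C.n) : C.edg i ∈ Ypart ε S :=
  mem_Ypart.2 ⟨hC (edg_mem_cycEdges C hi), C, hC, edg_mem_cycEdges C hi⟩

lemma prop_step {S : Finset E} {C : MCycle V E ε} (hC : cycEdges C ⊆ S) (hn : 2 ≤ C.n)
    {c : E → ZMod 2} (hc : c ∈ ZSp ε S) {i : ℕ} (hi : i < C.n)
    (hdeg : ydeg ε S (C.vtx ((i + 1) % C.n)) = 2) :
    c (C.edg i) = c (C.edg ((i + 1) % C.n)) := by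
  have hnpos : 0 < C.n := by omega
  set j := (i + 1) % C.n with hj
  have hjn : j < C.n := succ_mod_lt hnpos i
  have hij : i ≠ j := by
    intro h
    rw [hj] at h
    exact succ_mod_ne hn hi h.symm
  set x := C.vtx j with hx
  set a := C.edg i with ha
  set b := C.edg j with hb
  have hab : a ≠ b := fun h => hij (C.einj _ hi _ hjn h)
  have hεa : ε a = s(C.vtx i, x) := by rw [ha, C.incid i hi]
  have hεb : ε b = s(x, C.vtx ((j + 1) % C.n)) := by rw [hb, C.incid j hjn]
  have hxa : x ∈ ε a := by rw [hεa]; exact Sym2.mem_mk_right _ _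
  have hxb : x ∈ ε b := by rw [hεb]; exact Sym2.mem_mk_left _ _
  have hva : C.vtx i ≠ x := fun h => hij (C.vinj _ hi _ hjn h)
  have hvb : C.vtx ((j + 1) % C.n) ≠ x := fun h =>
    succ_mod_ne hn hjn (C.vinj _ (succ_mod_lt hnpos j) _ hjn h)
  have hla : ε a ≠ s(x, x) := by
    rw [hεa]
    intro h
    rw [Sym2.eq_iff] at h
    tauto
  have hlb : ε b ≠ s(x, x) := by
    rw [hεb]
    intro h
    rw [Sym2.eq_iff] at h
    tauto
  have haY : a ∈ Ypart ε S := edg_mem_Ypart hC hi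
  have hbY : b ∈ Ypart ε S := edg_mem_Ypart hC hjn
  have hsum := hc.1 x
  have hterm : ∀ f : E, (if ε f = s(x, x) then 0 else if x ∈ ε f then c f else 0)
      = if f = a ∨ f = b then c f else 0 := by
    intro f
    by_cases hf : f = a ∨ f = b
    · rw [if_pos hf]
      rcases hf with rfl | rfl
      · rw [if_neg hla, if_pos hxa]
      · rw [if_neg hlb, if_pos hxb]
    · rw [if_neg hf]
      push_neg at hf
      by_cases h1 : ε f = s(x, x)
      · rw [if_pos h1]
      · rw [if_neg h1]
        by_cases h2 : x ∈ ε f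
        · rw [if_pos h2]
          by_contra hcf
          have hfY : f ∈ Ypart ε S := chain_supp_Ypart hc hcf
          rcases ypart_two hdeg haY hbY hab hxa hxb f hfY h2 with h | h
          · exact hf.1 h
          · exact hf.2 h
        · rw [if_neg h2]
  have hsum2 : (∑ f : E, if f = a ∨ f = b then c f else 0) = 0 := by
    refine Eq.trans ?_ hsum
    exact Finset.sum_congr rfl fun f _ => (hterm f).symm
  have hsum3 : c a + c b = 0 := by
    have h4 : (∑ f : E, if f = a ∨ f = b then c f else 0)
        = (if a = a ∨ a = b then c a else 0) + (if b = a ∨ b = b then c b else 0) := by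
      refine Finset.sum_eq_add_of_mem a b (mem_univ a) (mem_univ b) hab ?_
      intro u _ hu
      rw [if_neg (by tauto)]
    rw [if_pos (Or.inl rfl), if_pos (Or.inr rfl)] at h4
    rw [← h4, hsum2]
  have hfin : ∀ u v : ZMod 2, u + v = 0 → u = v := by decide
  exact hfin _ _ hsum3

/-- number of branch vertices along a cycle -/
noncomputable def branchCount (ε : E → Sym2 V) (S : Finset E) (C : MCycle V E ε) : ℕ :=
  ((range C.n).filter (fun i => ydeg ε S (C.vtx i) ≠ 2)).card

lemma finrank_res_le (S : Finset E) (C : MCycle V E ε) (hC : cycEdges C ⊆ S) :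
    Module.finrank (ZMod 2) (LinearMap.range (resMap ε S (cycEdges C)))
      ≤ branchCount ε S C + 1 := by
  classical
  set A := cycEdges C with hA
  set B : Finset ℕ := insert 0 ((range C.n).filter (fun i => ydeg ε S (C.vtx i) ≠ 2)) with hB
  have hBn : ∀ i ∈ B, i < C.n := by
    intro i hi
    rw [hB, mem_insert, mem_filter, mem_range] at hi
    rcases hi with rfl | hi
    · exact C.npos
    · exact hi.1
  have hmemA : ∀ i ∈ B, C.edg i ∈ A := fun i hi => edg_mem_cycEdges C (hBn i hi)
  set θ : ({x // x ∈ A} → ZMod 2) →ₗ[ZMod 2] ({i // i ∈ B} → ZMod 2) :=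
    LinearMap.funLeft (ZMod 2) (ZMod 2) (fun i : {i // i ∈ B} => (⟨C.edg i, hmemA i i.2⟩ : {x // x ∈ A})) with hθ
  have hker : ∀ w ∈ LinearMap.range (resMap ε S A), θ w = 0 → w = 0 := by
    rintro w hw hw0
    obtain ⟨⟨c, hc⟩, rfl⟩ := hw
    have hB0 : ∀ i, i ∈ B → c (C.edg i) = 0 := by
      intro i hi
      have := congrFun hw0 ⟨i, hi⟩
      simpa [hθ, LinearMap.funLeft, resMap] using this
    have hall : ∀ i, i < C.n → c (C.edg i) = 0 := by
      rcases Nat.lt_or_ge C.n 2 with hn2 | hn2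
      · intro i hi
        have : i = 0 := by omega
        subst this
        exact hB0 0 (by rw [hB]; exact mem_insert_self _ _)
      · have hkey : ∀ k : ℕ, c (C.edg (k % C.n)) = 0 := by
          intro k
          induction k with
          | zero =>
            rw [Nat.zero_mod]
            exact hB0 0 (by rw [hB]; exact mem_insert_self _ _)
          | succ k ih =>
            have hrw : (k + 1) % C.n = (k % C.n + 1) % C.n := (Nat.mod_add_mod k C.n 1).symm
            by_cases hbr : ydeg ε S (C.vtx ((k + 1) % C.n)) = 2
            · have hstep := prop_step hC hn2 hc (Nat.mod_lt k (by omega) : k % C.n < C.n) (by rw [← hrw]; exact hbr)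
              rw [← hrw] at hstep
              rw [← hstep]
              exact ih
            · refine hB0 _ ?_
              rw [hB, mem_insert]
              right
              rw [mem_filter, mem_range]
              exact ⟨Nat.mod_lt _ (by omega), hbr⟩
        intro i hi
        have := hkey i
        rwa [Nat.mod_eq_of_lt hi] at this
    funext a
    obtain ⟨f, hf⟩ := a
    obtain ⟨i, hi, rfl⟩ := by
      simpa only [hA, cycEdges, mem_image, mem_range] using hf
    simpa [resMap, LinearMap.funLeft] using hall i hi
  have hinj : Function.Injective (θ.comp (LinearMap.range (resMap ε S A)).subtype) := by
    rw [← LinearMap.ker_eq_bot]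
    rw [LinearMap.ker_eq_bot']
    rintro ⟨w, hw⟩ h0
    have : θ w = 0 := h0
    have hw0 := hker w hw this
    exact Subtype.ext hw0
  have hle := LinearMap.finrank_le_finrank_of_injective hinj
  rw [Module.finrank_pi (ZMod 2)] at hle
  rw [Fintype.card_coe] at hle
  refine le_trans hle ?_
  rw [hB]
  calc (insert 0 ((range C.n).filter (fun i => ydeg ε S (C.vtx i) ≠ 2))).card
      ≤ ((range C.n).filter (fun i => ydeg ε S (C.vtx i) ≠ 2)).card + 1 :=
        Finset.card_insert_le _ _
    _ = branchCount ε S C + 1 := rfl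

/-- deleting the edges of a cycle: the rank drops, by at most `branchCount + 1` -/
lemma mu_drop (S : Finset E) (C : MCycle V E ε) (hC : cycEdges C ⊆ S) :
    mu ε S ≤ mu ε (S \ cycEdges C) + branchCount ε S C + 1 ∧
      mu ε (S \ cycEdges C) < mu ε S := by
  have h0 := mu_sdiff_add_finrank (ε := ε) S (cycEdges C)
  have h1 := finrank_res_le S C hC
  have h2 : 1 ≤ Module.finrank (ZMod 2) (LinearMap.range (resMap ε S (cycEdges C))) := by
    by_contra h
    push_neg at h
    have h3 : Module.finrank (ZMod 2) (LinearMap.range (resMap ε S (cycEdges C))) = 0 := by omega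
    have h4 := Submodule.finrank_eq_zero.1 h3
    have h5 : resMap ε S (cycEdges C) ⟨mchain C, mchain_mem_ZSp hC⟩ ∈
        LinearMap.range (resMap ε S (cycEdges C)) := ⟨_, rfl⟩
    rw [h4, Submodule.mem_bot] at h5
    have h6 := congrFun h5 ⟨C.edg 0, edg_mem_cycEdges C C.npos⟩
    have h7 : mchain C (C.edg 0) = 1 := mchain_apply_of_mem (edg_mem_cycEdges C C.npos)
    simp only [resMap, LinearMap.funLeft, LinearMap.coe_comp, LinearMap.coe_mk, AddHom.coe_mk,
      Function.comp_apply, Submodule.coe_subtype, Pi.zero_apply] at h6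
    rw [h7] at h6
    exact one_ne_zero h6
  omega


/-! ### towards the Moore bound -/

lemma branchCount_le_n (S : Finset E) (C : MCycle V E ε) : branchCount ε S C ≤ C.n := by
  calc branchCount ε S C ≤ (range C.n).card := Finset.card_filter_le _ _
    _ = C.n := Finset.card_range _

section Moore

variable {S : Finset E} {K : ℕ}

/-- the contradiction hypothesis: every cycle in `S` has more than `K` branch vertices -/
def NoSmall (ε : E → Sym2 V) (S : Finset E) (K : ℕ) : Prop :=
  ∀ C : MCycle V E ε, cycEdges C ⊆ S → ¬ branchCount ε S C ≤ K

lemma cyc_long (hcon : NoSmall ε S K) {C : MCycle V E ε} (hC : cycEdges C ⊆ S) : K < C.n := by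
  have h1 := hcon C hC
  have h2 := branchCount_le_n S C
  omega

lemma ypart_noloop (hcon : NoSmall ε S K) (hK : 1 ≤ K) {f : E} (hf : f ∈ Ypart ε S) (x : V) :
    ε f ≠ s(x, x) := by
  intro hloop
  obtain ⟨-, C, hCS, hfC⟩ := mem_Ypart.1 hf
  obtain ⟨i, hi, rfl⟩ := by
    simpa only [cycEdges, mem_image, mem_range] using hfC
  have hn : 2 ≤ C.n := by have := cyc_long hcon hCS; omega
  have h1 := C.incid i hi
  rw [hloop, Sym2.eq_iff] at h1
  have h2 : C.vtx i = C.vtx ((i + 1) % C.n) := by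
    rcases h1 with ⟨ha, hb⟩ | ⟨ha, hb⟩ <;> rw [← ha, ← hb]
  have := C.vinj _ hi _ (succ_mod_lt C.npos i) h2
  exact succ_mod_ne hn hi this.symm

lemma ydeg_eq_card (hcon : NoSmall ε S K) (hK : 1 ≤ K) (x : V) :
    ydeg ε S x = ((Ypart ε S).filter (fun f => x ∈ ε f)).card := by
  unfold ydeg wdeg
  rw [Finset.card_filter]
  refine Finset.sum_congr rfl fun f hf => ?_
  rw [if_neg (ypart_noloop hcon hK hf x)]

lemma ydeg_ge_two (hcon : NoSmall ε S K) (hK : 2 ≤ K) {f : E} (hf : f ∈ Ypart ε S)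
    {x : V} (hx : x ∈ ε f) : 2 ≤ ydeg ε S x := by
  obtain ⟨-, C, hCS, hfC⟩ := mem_Ypart.1 hf
  obtain ⟨i, hi, rfl⟩ := by
    simpa only [cycEdges, mem_image, mem_range] using hfC
  have hn : 2 ≤ C.n := by have := cyc_long hcon hCS; omega
  have hnpos : 0 < C.n := C.npos
  rw [C.incid i hi, Sym2.mem_iff] at hx
  -- x is a vertex of the cycle
  obtain ⟨i₀, hi₀, hvx⟩ : ∃ i₀, i₀ < C.n ∧ C.vtx i₀ = x := by
    rcases hx with h | h
    · exact ⟨i, hi, h.symm⟩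
    · exact ⟨(i + 1) % C.n, succ_mod_lt hnpos i, h.symm⟩
  set a := C.edg (prevIdx C.n i₀) with ha
  set b := C.edg i₀ with hb
  have hpl : prevIdx C.n i₀ < C.n := prevIdx_lt hnpos i₀
  have hab : a ≠ b := fun h => prevIdx_ne hn hi₀ (C.einj _ hpl _ hi₀ h)
  have hxa : x ∈ ε a := by
    rw [ha, C.incid _ hpl, succ_prevIdx hnpos hi₀, hvx]
    exact Sym2.mem_mk_right _ _
  have hxb : x ∈ ε b := by
    rw [hb, C.incid _ hi₀, hvx]
    exact Sym2.mem_mk_left _ _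
  have haY : a ∈ Ypart ε S := edg_mem_Ypart hCS hpl
  have hbY : b ∈ Ypart ε S := edg_mem_Ypart hCS hi₀
  rw [ydeg_eq_card hcon (by omega) x]
  have hsub : {a, b} ⊆ (Ypart ε S).filter (fun f => x ∈ ε f) := by
    intro u hu
    rw [mem_insert, mem_singleton] at hu
    rcases hu with rfl | rfl <;> exact mem_filter.2 ⟨by assumption, by assumption⟩
  calc 2 = ({a, b} : Finset E).card := by rw [card_insert_of_notMem (by simpa using hab), card_singleton]
    _ ≤ _ := Finset.card_le_card hsub

/-- positions of incidences of a vertex on a simple path -/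
lemma SPath.incident_edges (p : SPath ε) {m i : ℕ} (hm : m ≤ p.n) (hi : i < p.n)
    (hx : p.vtx m ∈ ε (p.edg i)) : i = m ∨ i + 1 = m := by
  rw [p.incid i hi, Sym2.mem_iff] at hx
  rcases hx with h | h
  · left; exact (p.vinj i (le_of_lt hi) m hm h.symm)
  · right; exact (p.vinj (i + 1) hi m hm h.symm)

lemma spath_nonloop (p : SPath ε) {i : ℕ} (hi : i < p.n) (x : V) : ε (p.edg i) ≠ s(x, x) := by
  intro h
  have h1 := p.incid i hi
  rw [h, Sym2.eq_iff] at h1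
  have h2 : p.vtx i = p.vtx (i + 1) := by
    rcases h1 with ⟨ha, hb⟩ | ⟨ha, hb⟩ <;> rw [← ha, ← hb]
  have := p.vinj i (le_of_lt hi) (i + 1) hi h2
  omega

noncomputable def pchain (p : SPath ε) : E → ZMod 2 := fun f => if f ∈ pEdges p then 1 else 0

lemma pchain_bdry (p : SPath ε) (x : V) :
    (∑ f : E, if ε f = s(x, x) then 0 else if x ∈ ε f then pchain p f else 0)
      = (if x = p.vtx 0 then 1 else 0) + (if x = p.vtx p.n then 1 else 0) := by
  by_cases hx : ∃ i₀, i₀ ≤ p.n ∧ p.vtx i₀ = x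
  · obtain ⟨i₀, hi₀, hvx⟩ := hx
    have huniq : ∀ j ≤ p.n, p.vtx j = x → j = i₀ := by
      intro j hj h
      exact p.vinj j hj i₀ hi₀ (h.trans hvx.symm)
    have hcontrib : ∀ f : E,
        (if ε f = s(x, x) then 0 else if x ∈ ε f then pchain p f else 0)
        = if (∃ i < p.n, p.edg i = f ∧ (i = i₀ ∨ i + 1 = i₀)) then 1 else 0 := by
      intro f
      by_cases hfp : ∃ i < p.n, p.edg i = f ∧ (i = i₀ ∨ i + 1 = i₀)
      · obtain ⟨i, hi, rfl, hii⟩ := hfp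
        have hex : (∃ i' < p.n, p.edg i' = p.edg i ∧ (i' = i₀ ∨ i' + 1 = i₀)) := ⟨i, hi, rfl, hii⟩
        have hxm : x ∈ ε (p.edg i) := by
          rw [p.incid i hi, Sym2.mem_iff]
          rcases hii with rfl | hii
          · left; exact hvx.symm
          · right
            rw [← hvx]
            congr 1
            omega
        rw [if_pos hex, if_neg (spath_nonloop p hi x), if_pos hxm, pchain]
        exact if_pos (by rw [pEdges]; exact mem_image.2 ⟨i, mem_range.2 hi, rfl⟩)
      · rw [if_neg hfp]
        by_cases h1 : ε f = s(x, x)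
        · rw [if_pos h1]
        · rw [if_neg h1]
          by_cases h2 : x ∈ ε f
          · rw [if_pos h2, pchain, if_neg]
            intro hmem
            obtain ⟨i, hi, rfl⟩ := by
              simpa only [pEdges, mem_image, mem_range] using hmem
            have hi' := p.incident_edges hi₀ hi (hvx ▸ h2)
            exact hfp ⟨i, hi, rfl, hi'⟩
          · rw [if_neg h2]
    rw [Finset.sum_congr rfl fun f _ => hcontrib f]
    -- now count the contributing edges
    by_cases hc1 : 1 ≤ i₀
    · by_cases hc2 : i₀ < p.n
      · -- interior vertex : exactly two edges
        have hne : p.edg (i₀ - 1) ≠ p.edg i₀ := by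
          intro h
          have := p.edg_inj (by omega) hc2 h
          omega
        have : (∑ f : E, if (∃ i < p.n, p.edg i = f ∧ (i = i₀ ∨ i + 1 = i₀)) then (1 : ZMod 2) else 0)
            = (if (∃ i < p.n, p.edg i = p.edg (i₀ - 1) ∧ (i = i₀ ∨ i + 1 = i₀)) then (1 : ZMod 2) else 0)
            + (if (∃ i < p.n, p.edg i = p.edg i₀ ∧ (i = i₀ ∨ i + 1 = i₀)) then (1 : ZMod 2) else 0) := by
          refine Finset.sum_eq_add_of_mem _ _ (mem_univ _) (mem_univ _) hne ?_
          intro f _ hf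
          rw [if_neg]
          rintro ⟨i, hi, rfl, hii⟩
          rcases hii with rfl | hii
          · exact hf.2 rfl
          · have : i = i₀ - 1 := by omega
            subst this
            exact hf.1 rfl
        rw [this, if_pos ⟨i₀ - 1, by omega, rfl, by omega⟩, if_pos ⟨i₀, hc2, rfl, by omega⟩,
          if_neg, if_neg]
        · decide
        · intro h
          have := huniq p.n le_rfl h.symm
          omega
        · intro h
          have := huniq 0 (by omega) h.symm
          omega
      · -- endpoint vertex i₀ = p.n ≥ 1 : one edge
        have hi₀n : i₀ = p.n := by omega
        have : (∑ f : E, if (∃ i < p.n, p.edg i = f ∧ (i = i₀ ∨ i + 1 = i₀)) then (1 : ZMod 2) else 0)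
            = (if (∃ i < p.n, p.edg i = p.edg (i₀ - 1) ∧ (i = i₀ ∨ i + 1 = i₀)) then (1 : ZMod 2) else 0) := by
          refine Finset.sum_eq_single_of_mem _ (mem_univ _) ?_
          intro f _ hf
          rw [if_neg]
          rintro ⟨i, hi, rfl, hii⟩
          have : i = i₀ - 1 := by omega
          subst this
          exact hf rfl
        rw [this, if_pos ⟨i₀ - 1, by omega, rfl, by omega⟩, if_neg, if_pos (by rw [← hvx, hi₀n])]
        · decide
        · intro h
          have := huniq 0 (by omega) h.symm
          omega
    · -- i₀ = 0
      have hi₀0 : i₀ = 0 := by omega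
      subst hi₀0
      by_cases hc2 : 0 < p.n
      · have : (∑ f : E, if (∃ i < p.n, p.edg i = f ∧ (i = 0 ∨ i + 1 = 0)) then (1 : ZMod 2) else 0)
            = (if (∃ i < p.n, p.edg i = p.edg 0 ∧ (i = 0 ∨ i + 1 = 0)) then (1 : ZMod 2) else 0) := by
          refine Finset.sum_eq_single_of_mem _ (mem_univ _) ?_
          intro f _ hf
          rw [if_neg]
          rintro ⟨i, hi, rfl, hii⟩
          have : i = 0 := by omega
          subst this
          exact hf rfl
        rw [this, if_pos ⟨0, hc2, rfl, by omega⟩, if_pos hvx.symm, if_neg]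
        · decide
        · intro h
          have := huniq p.n le_rfl h.symm
          omega
      · -- p.n = 0 : no edges at all
        have hn0 : p.n = 0 := by omega
        rw [Finset.sum_eq_zero, if_pos hvx.symm, if_pos (by rw [← hvx, hn0])]
        · decide
        · intro f _
          rw [if_neg]
          rintro ⟨i, hi, -, -⟩
          omega
  · push_neg at hx
    rw [Finset.sum_eq_zero, if_neg, if_neg]
    · decide
    · intro h
      exact hx p.n le_rfl h.symm
    · intro h
      exact hx 0 (by omega) h.symm
    · intro f _
      by_cases h1 : ε f = s(x, x)
      · rw [if_pos h1]
      · rw [if_neg h1]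
        by_cases h2 : x ∈ ε f
        · rw [if_pos h2, pchain, if_neg]
          intro hmem
          obtain ⟨i, hi, rfl⟩ := by
            simpa only [pEdges, mem_image, mem_range] using hmem
          rw [p.incid i hi, Sym2.mem_iff] at h2
          rcases h2 with h | h
          · exact hx i (by omega) h.symm
          · exact hx (i + 1) hi h.symm
        · rw [if_neg h2]

lemma bdry_add (c d : E → ZMod 2) (x : V) :
    (∑ f : E, if ε f = s(x, x) then 0 else if x ∈ ε f then (c + d) f else 0)
      = (∑ f : E, if ε f = s(x, x) then 0 else if x ∈ ε f then c f else 0)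
      + (∑ f : E, if ε f = s(x, x) then 0 else if x ∈ ε f then d f else 0) := by
  rw [← Finset.sum_add_distrib]
  refine Finset.sum_congr rfl fun f _ => ?_
  split_ifs <;> simp

/-- two paths with the same start and end give a cycle-space chain -/
lemma cycleCondM_pchain_add {p q : SPath ε} (h0 : p.vtx 0 = q.vtx 0)
    (hn : p.vtx p.n = q.vtx q.n) : cycleCondM ε (pchain p + pchain q) := by
  intro x
  rw [bdry_add, pchain_bdry, pchain_bdry, h0, hn]
  have hfin : ∀ u v : ZMod 2, (u + v) + (u + v) = 0 := by decide
  exact hfin _ _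


noncomputable def vbI (ε : E → Sym2 V) (S : Finset E) (p : SPath ε) : Finset V :=
  ((range p.n).image p.vtx).filter (fun v => ydeg ε S v ≠ 2)

noncomputable def vbF (ε : E → Sym2 V) (S : Finset E) (p : SPath ε) : Finset V :=
  ((range (p.n + 1)).image p.vtx).filter (fun v => ydeg ε S v ≠ 2)

lemma vbF_eq (p : SPath ε) : vbF ε S p =
    if ydeg ε S (p.vtx p.n) ≠ 2 then insert (p.vtx p.n) (vbI ε S p) else vbI ε S p := by
  unfold vbF vbI
  rw [Finset.range_add_one, Finset.image_insert, Finset.filter_insert]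

lemma vbF_subset (p : SPath ε) : vbF ε S p ⊆ insert (p.vtx p.n) (vbI ε S p) := by
  rw [vbF_eq]
  split_ifs
  · exact Finset.Subset.refl _
  · exact Finset.subset_insert _ _

lemma vbI_subset_vbF (p : SPath ε) : vbI ε S p ⊆ vbF ε S p := by
  intro v hv
  rw [vbI, mem_filter] at hv
  rw [vbF, mem_filter]
  refine ⟨?_, hv.2⟩
  obtain ⟨i, hi, rfl⟩ := mem_image.1 hv.1
  rw [mem_range] at hi
  exact mem_image.2 ⟨i, mem_range.2 (by omega), rfl⟩

lemma Ypart_subset : Ypart ε S ⊆ S := fun e he => (mem_Ypart.1 he).1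

lemma branchCount_le_card (S : Finset E) (C : MCycle V E ε) (W : Finset V)
    (h : ∀ i < C.n, C.vtx i ∈ W) :
    branchCount ε S C ≤ (W.filter (fun v => ydeg ε S v ≠ 2)).card := by
  unfold branchCount
  refine Finset.card_le_card_of_injOn (fun i => C.vtx i) ?_ ?_
  · intro i hi
    rw [Finset.mem_coe, mem_filter, mem_range] at hi
    exact mem_filter.2 ⟨h i hi.1, hi.2⟩
  · intro i hi j hj hij
    rw [Finset.mem_coe, mem_filter, mem_range] at hi hj
    exact C.vinj _ hi.1 _ hj.1 hij

lemma no_cycle_close (hcon : NoSmall ε S K) (p : SPath ε)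
    (hedges : ∀ i < p.n, p.edg i ∈ Ypart ε S)
    (hvb : (vbF ε S p).card ≤ K) {j : ℕ} {e' : E} (hj : j ≤ p.n) (he' : e' ∈ Ypart ε S)
    (he : ε e' = s(p.vtx p.n, p.vtx j)) (hne : ∀ i, j ≤ i → i < p.n → e' ≠ p.edg i) :
    False := by
  set C := closeCyc p j e' hj he hne with hC
  refine hcon C ?_ ?_
  · intro f hf
    rcases Finset.mem_insert.1 (closeCyc_edges p j e' hj he hne hf) with rfl | hfp
    · exact Ypart_subset he'
    · obtain ⟨i, hi, rfl⟩ := by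
        simpa only [pEdges, mem_image, mem_range] using hfp
      exact Ypart_subset (hedges i hi)
  · refine le_trans (branchCount_le_card S C ((range (p.n + 1)).image p.vtx) ?_) hvb
    intro i hi
    have hvtx : C.vtx i = p.vtx (j + i) := rfl
    have hin : C.n = p.n - j + 1 := rfl
    rw [hvtx]
    exact mem_image.2 ⟨j + i, mem_range.2 (by omega), rfl⟩

lemma exists_cont_two (hcon : NoSmall ε S K) (hK : 2 ≤ K) {x : V} {e : E}
    (he : e ∈ Ypart ε S) (hx : x ∈ ε e) (hdeg : ydeg ε S x = 2) :
    ∃ e', e' ∈ Ypart ε S ∧ x ∈ ε e' ∧ e' ≠ e ∧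
      ∀ g ∈ Ypart ε S, x ∈ ε g → g = e ∨ g = e' := by
  rw [ydeg_eq_card hcon (by omega) x] at hdeg
  set T := (Ypart ε S).filter (fun f => x ∈ ε f) with hT
  have heT : e ∈ T := mem_filter.2 ⟨he, hx⟩
  have hcard : (T.erase e).card = 1 := by
    rw [Finset.card_erase_of_mem heT, hdeg]
  obtain ⟨e', he'⟩ := Finset.card_eq_one.1 hcard
  have he'mem : e' ∈ T.erase e := by rw [he']; exact mem_singleton_self _
  have he'T : e' ∈ T := Finset.mem_of_mem_erase he'mem
  refine ⟨e', (mem_filter.1 he'T).1, (mem_filter.1 he'T).2, Finset.ne_of_mem_erase he'mem, ?_⟩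
  intro g hg hxg
  by_cases hge : g = e
  · exact Or.inl hge
  · right
    have : g ∈ T.erase e := Finset.mem_erase.2 ⟨hge, mem_filter.2 ⟨hg, hxg⟩⟩
    rw [he'] at this
    exact Finset.mem_singleton.1 this

lemma exists_cont_three (hcon : NoSmall ε S K) (hK : 2 ≤ K) {x : V} {e : E}
    (he : e ∈ Ypart ε S) (hdeg : 3 ≤ ydeg ε S x) :
    ∃ e₀ e₁, e₀ ∈ Ypart ε S ∧ e₁ ∈ Ypart ε S ∧ x ∈ ε e₀ ∧ x ∈ ε e₁ ∧ e₀ ≠ e₁ ∧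
      e₀ ≠ e ∧ e₁ ≠ e := by
  rw [ydeg_eq_card hcon (by omega) x] at hdeg
  set T := (Ypart ε S).filter (fun f => x ∈ ε f) with hT
  have hcard : 1 < (T.erase e).card := by
    have := Finset.card_erase_le (s := T) (a := e)
    have h2 := Finset.pred_card_le_card_erase (s := T) (a := e)
    omega
  obtain ⟨e₀, he₀, e₁, he₁, hne⟩ := Finset.one_lt_card.1 hcard
  have he₀T := Finset.mem_of_mem_erase he₀
  have he₁T := Finset.mem_of_mem_erase he₁
  exact ⟨e₀, e₁, (mem_filter.1 he₀T).1, (mem_filter.1 he₁T).1, (mem_filter.1 he₀T).2,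
    (mem_filter.1 he₁T).2, hne, Finset.ne_of_mem_erase he₀, Finset.ne_of_mem_erase he₁⟩

lemma extend_vtx (p : SPath ε) (e : E) (y : V) (he : ε e = s(p.vtx p.n, y))
    (hy : ∀ i ≤ p.n, p.vtx i ≠ y) {i : ℕ} (hi : i ≤ p.n) :
    (p.extend e y he hy).vtx i = p.vtx i := by
  have : i ≠ p.n + 1 := by omega
  simp only [SPath.extend, if_neg this]

lemma extend_edg (p : SPath ε) (e : E) (y : V) (he : ε e = s(p.vtx p.n, y))
    (hy : ∀ i ≤ p.n, p.vtx i ≠ y) {i : ℕ} (hi : i < p.n) :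
    (p.extend e y he hy).edg i = p.edg i := by
  have : i ≠ p.n := by omega
  simp only [SPath.extend, if_neg this]


lemma run_case (hcon : NoSmall ε S K) (hK : 6 ≤ K) (p : SPath ε) (hp1 : 1 ≤ p.n)
    (hpe : ∀ i < p.n, p.edg i ∈ Ypart ε S) (hvb : (vbI ε S p).card + 1 ≤ K) :
    3 ≤ ydeg ε S (p.vtx p.n) ∨
    ∃ p' : SPath ε, p'.n = p.n + 1 ∧ (∀ i < p'.n, p'.edg i ∈ Ypart ε S) ∧
      (∀ i ≤ p.n, p'.vtx i = p.vtx i) ∧ (∀ i < p.n, p'.edg i = p.edg i) ∧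
      vbI ε S p' = vbI ε S p := by
  have heY : p.edg (p.n - 1) ∈ Ypart ε S := hpe _ (by omega)
  have hxe : p.vtx p.n ∈ ε (p.edg (p.n - 1)) := by
    have h0 : p.n - 1 + 1 = p.n := by omega
    rw [p.incid (p.n - 1) (by omega), h0]
    exact Sym2.mem_mk_right _ _
  have h2 : 2 ≤ ydeg ε S (p.vtx p.n) := ydeg_ge_two hcon (by omega) heY hxe
  by_cases h3 : 3 ≤ ydeg ε S (p.vtx p.n)
  · exact Or.inl h3
  · have hdeg : ydeg ε S (p.vtx p.n) = 2 := by omega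
    obtain ⟨e', he'Y, hxe', hne', -⟩ := exists_cont_two hcon (by omega) heY hxe hdeg
    obtain ⟨y, hy⟩ := Sym2.mem_iff_exists.1 hxe'
    have hyx : y ≠ p.vtx p.n := by
      intro h
      refine ypart_noloop hcon (by omega) he'Y (p.vtx p.n) ?_
      rw [hy, h]
    have hepath : ∀ i, i < p.n → e' ≠ p.edg i := by
      intro i hi heq
      have hxm : p.vtx p.n ∈ ε (p.edg i) := by
        rw [← heq, hy]
        exact Sym2.mem_mk_left _ _
      rcases p.incident_edges le_rfl hi hxm with h | h
      · omega
      · refine hne' ?_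
        rw [heq]
        congr 1
        omega
    have hvbFI : vbF ε S p = vbI ε S p := by
      rw [vbF_eq, if_neg (not_not_intro hdeg)]
    by_cases hmem : ∃ j, j ≤ p.n ∧ p.vtx j = y
    · obtain ⟨j, hj, hvj⟩ := hmem
      exfalso
      have hjn : j < p.n := by
        rcases Nat.lt_or_ge j p.n with h | h
        · exact h
        · exfalso
          have hje : j = p.n := by omega
          subst hje
          exact hyx hvj.symm
      refine no_cycle_close hcon p hpe ?_ (le_of_lt hjn) he'Y (by rw [hy, ← hvj])
        (fun i _ h2' => hepath i h2')
      rw [hvbFI]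
      omega
    · push_neg at hmem
      right
      refine ⟨p.extend e' y (by rw [hy]) hmem, rfl, ?_, fun i hi => extend_vtx p e' y _ _ hi,
        fun i hi => extend_edg p e' y _ _ hi, ?_⟩
      · intro i hi
        by_cases hlast : i = p.n
        · subst hlast
          have : (p.extend e' y (by rw [hy]) hmem).edg p.n = e' := if_pos rfl
          rw [this]
          exact he'Y
        · have hi' : i < p.n := by
            have : (p.extend e' y (by rw [hy]) hmem).n = p.n + 1 := rfl
            omega
          rw [extend_edg p e' y _ _ hi']
          exact hpe i hi'
      · have him : ((range ((p.extend e' y (by rw [hy]) hmem).n)).image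
            (p.extend e' y (by rw [hy]) hmem).vtx) = (range (p.n + 1)).image p.vtx := by
          refine Finset.image_congr ?_
          intro i hi
          rw [Finset.coe_range, Set.mem_Iio] at hi
          have hi' : i ≤ p.n := by
            have : (p.extend e' y (by rw [hy]) hmem).n = p.n + 1 := rfl
            omega
          exact extend_vtx p e' y _ _ hi'
        rw [vbI, him, ← vbF, hvbFI]


lemma run_ext (hcon : NoSmall ε S K) (hK : 6 ≤ K) :
    ∀ (fuel : ℕ) (p : SPath ε), 1 ≤ p.n → (∀ i < p.n, p.edg i ∈ Ypart ε S) →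
      Fintype.card V ≤ p.n + 1 + fuel → (vbI ε S p).card + 1 ≤ K →
      ∃ q : SPath ε, 1 ≤ q.n ∧ (∀ i < q.n, q.edg i ∈ Ypart ε S) ∧ p.n ≤ q.n ∧
        (∀ i ≤ p.n, q.vtx i = p.vtx i) ∧ (∀ i < p.n, q.edg i = p.edg i) ∧
        3 ≤ ydeg ε S (q.vtx q.n) ∧ vbF ε S q ⊆ insert (q.vtx q.n) (vbI ε S p) := by
  intro fuel
  induction fuel with
  | zero =>
    intro p hp1 hpe hcard hvb
    -- either we stop at a branch vertex, or we get a contradiction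
    rcases run_case hcon hK p hp1 hpe hvb with hstop | ⟨p', hp'n, hp'e, hp'v, hp'ed, hvbI⟩
    · exact ⟨p, hp1, hpe, le_rfl, fun _ _ => rfl, fun _ _ => rfl, hstop, vbF_subset p⟩
    · exfalso
      have := p'.card_bound
      omega
  | succ fuel ih =>
    intro p hp1 hpe hcard hvb
    rcases run_case hcon hK p hp1 hpe hvb with hstop | ⟨p', hp'n, hp'e, hp'v, hp'ed, hvbI⟩
    · exact ⟨p, hp1, hpe, le_rfl, fun _ _ => rfl, fun _ _ => rfl, hstop, vbF_subset p⟩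
    · obtain ⟨q, hq1, hqe, hqn, hqv, hqed, hqdeg, hqvb⟩ :=
        ih p' (by omega) hp'e (by omega) (by rw [hvbI]; omega)
      refine ⟨q, hq1, hqe, by omega, ?_, ?_, hqdeg, ?_⟩
      · intro i hi
        rw [hqv i (by omega), hp'v i hi]
      · intro i hi
        rw [hqed i (by omega), hp'ed i hi]
      · rw [hvbI] at hqvb
        exact hqvb


def Diverge (p q : SPath ε) : Prop :=
  ∃ m, m < p.n ∧ m < q.n ∧ (∀ i ≤ m, p.vtx i = q.vtx i) ∧ (∀ i < m, p.edg i = q.edg i) ∧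
    p.edg m ≠ q.edg m

lemma pEdges_vertex {p : SPath ε} {f : E} (hf : f ∈ pEdges p) {x : V} (hx : x ∈ ε f) :
    x ∈ (range (p.n + 1)).image p.vtx := by
  obtain ⟨i, hi, rfl⟩ := by
    simpa only [pEdges, mem_image, mem_range] using hf
  rw [p.incid i hi, Sym2.mem_iff] at hx
  rcases hx with h | h
  · exact mem_image.2 ⟨i, mem_range.2 (by omega), h.symm⟩
  · exact mem_image.2 ⟨i + 1, mem_range.2 (by omega), h.symm⟩

lemma pchain_eq_zero {p : SPath ε} {f : E} (hf : f ∉ pEdges p) : pchain p f = 0 :=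
  if_neg hf

lemma no_diverge_meet (hcon : NoSmall ε S K) (hK : 6 ≤ K) {p q : SPath ε}
    (hpe : ∀ i < p.n, p.edg i ∈ Ypart ε S) (hqe : ∀ i < q.n, q.edg i ∈ Ypart ε S)
    (h0 : p.vtx 0 = q.vtx 0) (hnn : p.vtx p.n = q.vtx q.n)
    (hd : Diverge p q)
    (hbp : (vbF ε S p).card + (vbF ε S q).card ≤ K) : False := by
  obtain ⟨m, hmp, hmq, hvagree, heagree, hene⟩ := hd
  set c := pchain p + pchain q with hc
  have hcyc : cycleCondM ε c := cycleCondM_pchain_add h0 hnn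
  have he₀ : p.edg m ∉ pEdges q := by
    intro hmem
    obtain ⟨i, hi, hieq⟩ := by
      simpa only [pEdges, mem_image, mem_range] using hmem
    have hxm : q.vtx m ∈ ε (q.edg i) := by
      rw [hieq, p.incid m hmp, ← hvagree m le_rfl, Sym2.mem_iff]
      left
      rfl
    rcases q.incident_edges (by omega) hi hxm with h | h
    · subst h
      exact hene hieq.symm
    · have him : i = m - 1 := by omega
      subst him
      have h1 : q.edg (m - 1) = p.edg (m - 1) := (heagree (m - 1) (by omega)).symm
      rw [h1] at hieq
      have := p.edg_inj (by omega : m - 1 < p.n) hmp hieq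
      omega
  have hcne : c ≠ 0 := by
    intro h
    have h1 := congrFun h (p.edg m)
    rw [hc] at h1
    simp only [Pi.add_apply, Pi.zero_apply] at h1
    rw [pchain_eq_zero he₀] at h1
    rw [pchain] at h1
    rw [if_pos (by rw [pEdges]; exact mem_image.2 ⟨m, mem_range.2 hmp, rfl⟩)] at h1
    simpa using h1
  obtain ⟨C, hC⟩ := exists_cycle_of_chain hcyc hcne
  have hCE : ∀ f ∈ cycEdges C, f ∈ pEdges p ∪ pEdges q := by
    intro f hf
    have h1 := hC f hf
    rw [hc] at h1
    by_contra hmem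
    rw [Finset.mem_union] at hmem
    push_neg at hmem
    simp only [Pi.add_apply, pchain_eq_zero hmem.1, pchain_eq_zero hmem.2, add_zero] at h1
    exact h1 rfl
  refine hcon C ?_ ?_
  · intro f hf
    rcases Finset.mem_union.1 (hCE f hf) with h | h
    · obtain ⟨i, hi, rfl⟩ := by
        simpa only [pEdges, mem_image, mem_range] using h
      exact Ypart_subset (hpe i hi)
    · obtain ⟨i, hi, rfl⟩ := by
        simpa only [pEdges, mem_image, mem_range] using h
      exact Ypart_subset (hqe i hi)
  · have hW : ∀ i < C.n, C.vtx i ∈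
        ((range (p.n + 1)).image p.vtx) ∪ ((range (q.n + 1)).image q.vtx) := by
      intro i hi
      have hxm : C.vtx i ∈ ε (C.edg i) := by
        rw [C.incid i hi]
        exact Sym2.mem_mk_left _ _
      rcases Finset.mem_union.1 (hCE _ (edg_mem_cycEdges C hi)) with h | h
      · exact Finset.mem_union_left _ (pEdges_vertex h hxm)
      · exact Finset.mem_union_right _ (pEdges_vertex h hxm)
    refine le_trans (branchCount_le_card S C _ hW) ?_
    rw [Finset.filter_union]
    refine le_trans (Finset.card_union_le _ _) ?_
    exact le_trans (Nat.add_le_add le_rfl le_rfl) hbp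

lemma endpoint_incident (p : SPath ε) (hp1 : 1 ≤ p.n) :
    p.vtx p.n ∈ ε (p.edg (p.n - 1)) := by
  have h0 : p.n - 1 + 1 = p.n := by omega
  rw [p.incid (p.n - 1) (by omega), h0]
  exact Sym2.mem_mk_right _ _

/-- build a child path starting from a fresh edge at the endpoint of `p` -/
lemma child_of_edge (hcon : NoSmall ε S K) (hK : 6 ≤ K) (p : SPath ε) (hp1 : 1 ≤ p.n)
    (hpe : ∀ i < p.n, p.edg i ∈ Ypart ε S) (hvb : (vbF ε S p).card + 1 ≤ K)
    {e' : E} (he'Y : e' ∈ Ypart ε S) (hxe' : p.vtx p.n ∈ ε e')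
    (hne' : ∀ i < p.n, e' ≠ p.edg i) :
    ∃ q : SPath ε, 1 ≤ q.n ∧ (∀ i < q.n, q.edg i ∈ Ypart ε S) ∧ p.n < q.n ∧
      (∀ i ≤ p.n, q.vtx i = p.vtx i) ∧ (∀ i < p.n, q.edg i = p.edg i) ∧
      q.edg p.n = e' ∧ 3 ≤ ydeg ε S (q.vtx q.n) ∧
      (vbF ε S q).card ≤ (vbF ε S p).card + 1 := by
  obtain ⟨y, hy⟩ := Sym2.mem_iff_exists.1 hxe'
  have hyx : y ≠ p.vtx p.n := by
    intro h
    refine ypart_noloop hcon (by omega) he'Y (p.vtx p.n) ?_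
    rw [hy, h]
  have hfresh : ∀ j ≤ p.n, p.vtx j ≠ y := by
    intro j hj hvj
    have hjn : j < p.n := by
      rcases Nat.lt_or_ge j p.n with h | h
      · exact h
      · exfalso
        have hje : j = p.n := by omega
        subst hje
        exact hyx hvj.symm
    exact no_cycle_close hcon p hpe (by omega) (le_of_lt hjn) he'Y (by rw [hy, ← hvj])
      (fun i _ h2' => hne' i h2')
  set p' := p.extend e' y (by rw [hy]) hfresh with hp'
  have hp'n : p'.n = p.n + 1 := rfl
  have hp'edg : ∀ i < p.n, p'.edg i = p.edg i := fun i hi => extend_edg p e' y _ _ hi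
  have hp'elast : p'.edg p.n = e' := if_pos rfl
  have hp'vtx : ∀ i ≤ p.n, p'.vtx i = p.vtx i := fun i hi => extend_vtx p e' y _ _ hi
  have hp'E : ∀ i < p'.n, p'.edg i ∈ Ypart ε S := by
    intro i hi
    rw [hp'n] at hi
    by_cases hlast : i = p.n
    · subst hlast
      rw [hp'elast]
      exact he'Y
    · rw [hp'edg i (by omega)]
      exact hpe i (by omega)
  have hvbIp' : vbI ε S p' = vbF ε S p := by
    have him : ((range p'.n).image p'.vtx) = (range (p.n + 1)).image p.vtx := by
      rw [hp'n]
      refine Finset.image_congr ?_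
      intro i hi
      rw [Finset.coe_range, Set.mem_Iio] at hi
      exact hp'vtx i (by omega)
    rw [vbI, him, ← vbF]
  obtain ⟨q, hq1, hqe, hqn, hqv, hqed, hqdeg, hqvb⟩ :=
    run_ext hcon hK (Fintype.card V) p' (by omega) hp'E (by omega) (by rw [hvbIp']; omega)
  refine ⟨q, hq1, hqe, by omega, ?_, ?_, ?_, hqdeg, ?_⟩
  · intro i hi
    rw [hqv i (by omega), hp'vtx i hi]
  · intro i hi
    rw [hqed i (by omega), hp'edg i hi]
  · rw [hqed p.n (by omega), hp'elast]
  · rw [hvbIp'] at hqvb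
    calc (vbF ε S q).card ≤ (insert (q.vtx q.n) (vbF ε S p)).card := Finset.card_le_card hqvb
      _ ≤ (vbF ε S p).card + 1 := Finset.card_insert_le _ _


lemma fin_ext_last {k : ℕ} {σ τ : Fin (k + 1) → Bool}
    (hpre : σ ∘ Fin.castSucc = τ ∘ Fin.castSucc) (hlast : σ (Fin.last k) = τ (Fin.last k)) :
    σ = τ := by
  funext i
  induction i using Fin.lastCases with
  | last => exact hlast
  | cast i => exact congrFun hpre i

lemma fam (hcon : NoSmall ε S K) (hK : 6 ≤ K) (r : V) (hr : 3 ≤ ydeg ε S r) :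
    ∀ k : ℕ, 1 ≤ k → k + 2 ≤ K →
    ∃ P : (Fin k → Bool) → SPath ε,
      (∀ σ, 1 ≤ (P σ).n ∧ (P σ).vtx 0 = r ∧ (∀ i < (P σ).n, (P σ).edg i ∈ Ypart ε S) ∧
        3 ≤ ydeg ε S ((P σ).vtx ((P σ).n)) ∧ (vbF ε S (P σ)).card ≤ k + 1) ∧
      (∀ σ τ, σ ≠ τ → Diverge (P σ) (P τ)) := by
  intro k
  induction k with
  | zero => omega
  | succ k ih =>
    intro _ hkK
    rcases Nat.eq_zero_or_pos k with hk0 | hkpos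
    · -- base level : two single-edge children of the root
      subst hk0
      have hrcard : 1 < ((Ypart ε S).filter (fun f => r ∈ ε f)).card := by
        rw [ydeg_eq_card hcon (by omega) r] at hr
        omega
      obtain ⟨e₀, he₀, e₁, he₁, hne⟩ := Finset.one_lt_card.1 hrcard
      rw [mem_filter] at he₀ he₁
      have child : ∀ e : E, e ∈ Ypart ε S → r ∈ ε e →
          ∃ q : SPath ε, 1 ≤ q.n ∧ q.vtx 0 = r ∧ (∀ i < q.n, q.edg i ∈ Ypart ε S) ∧
            3 ≤ ydeg ε S (q.vtx q.n) ∧ (vbF ε S q).card ≤ 2 ∧ q.edg 0 = e := by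
        intro e heY hre
        obtain ⟨y, hy⟩ := Sym2.mem_iff_exists.1 hre
        have hyr : r ≠ y := by
          intro h
          refine ypart_noloop hcon (by omega) heY r ?_
          rw [hy, ← h]
        set p₀ := SPath.single r y e hy hyr with hp₀
        have hp₀n : p₀.n = 1 := rfl
        have hp₀v0 : p₀.vtx 0 = r := rfl
        have hp₀e : ∀ i < p₀.n, p₀.edg i ∈ Ypart ε S := by
          intro i hi
          have : p₀.edg i = e := rfl
          rw [this]
          exact heY
        have hvbI : (vbI ε S p₀).card ≤ 1 := by
          have hsub : vbI ε S p₀ ⊆ {r} := by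
            intro v hv
            rw [vbI, mem_filter] at hv
            obtain ⟨i, hi, rfl⟩ := mem_image.1 hv.1
            rw [mem_range, hp₀n] at hi
            have : i = 0 := by omega
            subst this
            rw [hp₀v0]
            exact mem_singleton_self _
          calc (vbI ε S p₀).card ≤ ({r} : Finset V).card := Finset.card_le_card hsub
            _ = 1 := Finset.card_singleton _
        obtain ⟨q, hq1, hqe, hqn, hqv, hqed, hqdeg, hqvb⟩ :=
          run_ext hcon hK (Fintype.card V) p₀ (by omega) hp₀e (by omega) (by omega)
        refine ⟨q, hq1, ?_, hqe, hqdeg, ?_, ?_⟩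
        · rw [hqv 0 (by omega), hp₀v0]
        · calc (vbF ε S q).card ≤ (insert (q.vtx q.n) (vbI ε S p₀)).card :=
              Finset.card_le_card hqvb
            _ ≤ (vbI ε S p₀).card + 1 := Finset.card_insert_le _ _
            _ ≤ 2 := by omega
        · rw [hqed 0 (by omega)]
          rfl
      obtain ⟨q₀, hq₀⟩ := child e₀ he₀.1 he₀.2
      obtain ⟨q₁, hq₁⟩ := child e₁ he₁.1 he₁.2
      refine ⟨fun σ => if σ 0 then q₁ else q₀, ?_, ?_⟩
      · intro σ
        by_cases h : σ 0 <;> simp only [h, if_true, if_false]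
        · exact ⟨hq₁.1, hq₁.2.1, hq₁.2.2.1, hq₁.2.2.2.1, hq₁.2.2.2.2.1⟩
        · exact ⟨hq₀.1, hq₀.2.1, hq₀.2.2.1, hq₀.2.2.2.1, hq₀.2.2.2.2.1⟩
      · intro σ τ hστ
        have hστ0 : σ 0 ≠ τ 0 := by
          intro h
          refine hστ (funext fun i => ?_)
          have : i = 0 := by omega
          subst this
          exact h
        have hd : Diverge q₀ q₁ := by
          refine ⟨0, by omega, by omega, ?_, ?_, ?_⟩
          · intro i hi
            have : i = 0 := by omega
            subst this
            rw [hq₀.2.1, hq₁.2.1]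
          · intro i hi
            omega
          · rw [hq₀.2.2.2.2.2, hq₁.2.2.2.2.2]
            exact fun h => hne h
        have hd' : Diverge q₁ q₀ := by
          obtain ⟨m, h1, h2, h3, h4, h5⟩ := hd
          exact ⟨m, h2, h1, fun i hi => (h3 i hi).symm, fun i hi => (h4 i hi).symm,
            fun h => h5 h.symm⟩
        by_cases h : σ 0
        · have hτ : τ 0 = false := by
            cases hτ0 : τ 0
            · rfl
            · exact absurd (by rw [h, hτ0]) hστ0
          simp only [h, hτ, if_true, if_false]
          exact hd'
        · have hσ0 : σ 0 = false := by
            cases hσ0 : σ 0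
            · rfl
            · exact absurd hσ0 h
          have hτ : τ 0 = true := by
            cases hτ0 : τ 0
            · exact absurd (by rw [hσ0, hτ0]) hστ0
            · rfl
          simp only [hσ0, hτ, if_true, if_false, Bool.false_eq_true]
          exact hd
    · -- inductive step : split each path at its branch endpoint
      obtain ⟨P, hP, hPd⟩ := ih hkpos (by omega)
      have step : ∀ σ' : Fin k → Bool,
          ∃ q₀ q₁ : SPath ε,
            (1 ≤ q₀.n ∧ q₀.vtx 0 = r ∧ (∀ i < q₀.n, q₀.edg i ∈ Ypart ε S) ∧
              3 ≤ ydeg ε S (q₀.vtx q₀.n) ∧ (vbF ε S q₀).card ≤ k + 2) ∧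
            (1 ≤ q₁.n ∧ q₁.vtx 0 = r ∧ (∀ i < q₁.n, q₁.edg i ∈ Ypart ε S) ∧
              3 ≤ ydeg ε S (q₁.vtx q₁.n) ∧ (vbF ε S q₁).card ≤ k + 2) ∧
            ((P σ').n < q₀.n ∧ (P σ').n < q₁.n) ∧
            (∀ i ≤ (P σ').n, q₀.vtx i = (P σ').vtx i) ∧
            (∀ i ≤ (P σ').n, q₁.vtx i = (P σ').vtx i) ∧
            (∀ i < (P σ').n, q₀.edg i = (P σ').edg i) ∧
            (∀ i < (P σ').n, q₁.edg i = (P σ').edg i) ∧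
            q₀.edg (P σ').n ≠ q₁.edg (P σ').n := by
        intro σ'
        obtain ⟨hp1, hpv0, hpe, hpdeg, hpvb⟩ := hP σ'
        set p := P σ' with hp
        have heY : p.edg (p.n - 1) ∈ Ypart ε S := hpe _ (by omega)
        obtain ⟨e₀, e₁, he₀Y, he₁Y, hxe₀, hxe₁, hne01, hne₀, hne₁⟩ :=
          exists_cont_three hcon (by omega) heY hpdeg
        have hnopath : ∀ (e' : E), p.vtx p.n ∈ ε e' → e' ≠ p.edg (p.n - 1) →
            ∀ i < p.n, e' ≠ p.edg i := by
          intro e' hxe' hnee i hi heq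
          rcases p.incident_edges le_rfl hi (by rw [← heq] at *; exact hxe') with h | h
          · omega
          · refine hnee ?_
            rw [heq]
            congr 1
            omega
        obtain ⟨q₀, hq₀⟩ := child_of_edge hcon hK p hp1 hpe (by omega) he₀Y hxe₀
          (hnopath e₀ hxe₀ hne₀)
        obtain ⟨q₁, hq₁⟩ := child_of_edge hcon hK p hp1 hpe (by omega) he₁Y hxe₁
          (hnopath e₁ hxe₁ hne₁)
        obtain ⟨ha1, ha2, ha3, ha4, ha5, ha6, ha7, ha8⟩ := hq₀
        obtain ⟨hb1, hb2, hb3, hb4, hb5, hb6, hb7, hb8⟩ := hq₁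
        refine ⟨q₀, q₁,
          ⟨ha1, by rw [ha4 0 (by omega)]; exact hpv0, ha2, ha7, by omega⟩,
          ⟨hb1, by rw [hb4 0 (by omega)]; exact hpv0, hb2, hb7, by omega⟩,
          ⟨ha3, hb3⟩, ha4, hb4, ha5, hb5, ?_⟩
        rw [ha6, hb6]
        exact hne01
      choose Q₀ Q₁ hQ using step
      refine ⟨fun σ => if σ (Fin.last k) then Q₁ (σ ∘ Fin.castSucc) else Q₀ (σ ∘ Fin.castSucc),
        ?_, ?_⟩
      · intro σ
        by_cases h : σ (Fin.last k) <;> simp only [h, if_true, if_false]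
        · exact (hQ (σ ∘ Fin.castSucc)).2.1
        · exact (hQ (σ ∘ Fin.castSucc)).1
      · intro σ τ hστ
        by_cases hpre : σ ∘ Fin.castSucc = τ ∘ Fin.castSucc
        · -- same prefix, different last coordinate
          have hlast : σ (Fin.last k) ≠ τ (Fin.last k) := fun h => hστ (fin_ext_last hpre h)
          set σ' := σ ∘ Fin.castSucc with hσ'
          obtain ⟨h1, h2, ⟨h3a, h3b⟩, h4a, h4b, h5a, h5b, h6⟩ := hQ σ'
          have hd01 : Diverge (Q₀ σ') (Q₁ σ') :=
            ⟨(P σ').n, by omega, by omega,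
              fun i hi => by rw [h4a i hi, h4b i hi],
              fun i hi => by rw [h5a i hi, h5b i hi], h6⟩
          have hd10 : Diverge (Q₁ σ') (Q₀ σ') := by
            obtain ⟨m, ha, hb, hc, hd, he⟩ := hd01
            exact ⟨m, hb, ha, fun i hi => (hc i hi).symm, fun i hi => (hd i hi).symm,
              fun h => he h.symm⟩
          dsimp only
          rw [← hσ', ← hpre]
          by_cases hb : σ (Fin.last k)
          · have hc : τ (Fin.last k) = false := by
              cases hc' : τ (Fin.last k)
              · rfl
              · exact absurd (by rw [hb, hc']) hlast
            simp only [hb, hc, if_true, if_false]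
            exact hd10
          · have hb' : σ (Fin.last k) = false := by
              cases hb'' : σ (Fin.last k)
              · rfl
              · exact absurd hb'' hb
            have hc : τ (Fin.last k) = true := by
              cases hc' : τ (Fin.last k)
              · exact absurd (by rw [hb', hc']) hlast
              · rfl
            simp only [hb', hc, if_true, if_false, Bool.false_eq_true]
            exact hd01
        · -- prefixes diverge already
          have hdP := hPd _ _ hpre
          obtain ⟨m, hmp, hmq, hvag, heag, hene⟩ := hdP
          have key : ∀ (ρ : Fin (k+1) → Bool),
              (∀ i ≤ (P (ρ ∘ Fin.castSucc)).n,
                  (if ρ (Fin.last k) then Q₁ (ρ ∘ Fin.castSucc) else Q₀ (ρ ∘ Fin.castSucc)).vtx i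
                    = (P (ρ ∘ Fin.castSucc)).vtx i) ∧
              (∀ i < (P (ρ ∘ Fin.castSucc)).n,
                  (if ρ (Fin.last k) then Q₁ (ρ ∘ Fin.castSucc) else Q₀ (ρ ∘ Fin.castSucc)).edg i
                    = (P (ρ ∘ Fin.castSucc)).edg i) ∧
              (P (ρ ∘ Fin.castSucc)).n <
                  (if ρ (Fin.last k) then Q₁ (ρ ∘ Fin.castSucc) else Q₀ (ρ ∘ Fin.castSucc)).n := by
            intro ρ
            obtain ⟨h1, h2, ⟨h3a, h3b⟩, h4a, h4b, h5a, h5b, h6⟩ := hQ (ρ ∘ Fin.castSucc)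
            by_cases hb : ρ (Fin.last k) <;> simp only [hb, if_true, if_false]
            · exact ⟨h4b, h5b, h3b⟩
            · exact ⟨h4a, h5a, h3a⟩
          obtain ⟨hσv, hσe, hσn⟩ := key σ
          obtain ⟨hτv, hτe, hτn⟩ := key τ
          dsimp only
          refine ⟨m, by omega, by omega, ?_, ?_, ?_⟩
          · intro i hi
            rw [hσv i (by omega), hτv i (by omega)]
            exact hvag i hi
          · intro i hi
            rw [hσe i (by omega), hτe i (by omega)]
            exact heag i hi
          · rw [hσe m (by omega), hτe m (by omega)]
            exact hene


end Moore

/-- Moore-type bound: a nontrivial graph contains a cycle with few branch vertices. -/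
lemma moore (S : Finset E) (hS : mu ε S ≠ 0) :
    ∃ C : MCycle V E ε, cycEdges C ⊆ S ∧
      branchCount ε S C ≤ 2 * Nat.log 2 (Fintype.card V) + 6 := by
  by_contra hcon'
  push_neg at hcon'
  set K := 2 * Nat.log 2 (Fintype.card V) + 6 with hKdef
  have hcon : NoSmall ε S K := fun C hC hle => absurd hle (Nat.not_le_of_lt (hcon' C hC))
  have hK : 6 ≤ K := by omega
  have hbot : ZSp ε S ≠ ⊥ := by
    intro h
    refine hS ?_
    rw [mu, h]
    exact finrank_bot _ _
  obtain ⟨c, hc, hcne⟩ := (Submodule.ne_bot_iff _).1 hbot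
  obtain ⟨C₀, hC₀⟩ := exists_cycle_of_chain hc.1 hcne
  have hC₀S : cycEdges C₀ ⊆ S := by
    intro f hf
    by_contra h
    exact hC₀ f hf (hc.2 f h)
  have hbc := hcon C₀ hC₀S
  obtain ⟨i₀, hi₀⟩ := Finset.card_pos.1 (show 0 < branchCount ε S C₀ by
    unfold branchCount at *
    omega)
  rw [mem_filter, mem_range] at hi₀
  set r := C₀.vtx i₀ with hrdef
  have hrY : C₀.edg i₀ ∈ Ypart ε S := edg_mem_Ypart hC₀S hi₀.1
  have hrι : r ∈ ε (C₀.edg i₀) := by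
    rw [C₀.incid i₀ hi₀.1]
    exact Sym2.mem_mk_left _ _
  have hr2 : 2 ≤ ydeg ε S r := ydeg_ge_two hcon (by omega) hrY hrι
  have hr3 : 3 ≤ ydeg ε S r := by
    have := hi₀.2
    omega
  set kk := Nat.log 2 (Fintype.card V) + 1 with hkk
  obtain ⟨P, hP, hPd⟩ := fam hcon hK r hr3 kk (by omega) (by omega)
  have hinj : Function.Injective (fun σ : Fin kk → Bool => (P σ).vtx (P σ).n) := by
    intro σ τ h
    by_contra hne
    refine no_diverge_meet hcon hK (hP σ).2.2.1 (hP τ).2.2.1 ?_ h (hPd σ τ hne) ?_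
    · rw [(hP σ).2.1, (hP τ).2.1]
    · have h1 := (hP σ).2.2.2.2
      have h2 := (hP τ).2.2.2.2
      omega
  have hcard := Fintype.card_le_of_injective _ hinj
  have hcf : Fintype.card (Fin kk → Bool) = 2 ^ kk := by
    rw [Fintype.card_fun]
    simp
  rw [hcf] at hcard
  have hpow : Fintype.card V < 2 ^ kk := by
    rw [hkk]
    exact Nat.lt_pow_succ_log_self (by norm_num) _
  omega


/-! ### weakly fundamental lists -/

lemma mu_erase {S : Finset E} {C : MCycle V E ε} {e : E} (hC : cycEdges C ⊆ S)
    (he : e ∈ cycEdges C) : mu ε (S.erase e) + 1 = mu ε S := by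
  have h0 := mu_sdiff_add_finrank (ε := ε) S {e}
  rw [Finset.sdiff_singleton_eq_erase] at h0
  have hle : Module.finrank (ZMod 2) (LinearMap.range (resMap ε S {e})) ≤ 1 := by
    have h1 := Submodule.finrank_le (LinearMap.range (resMap ε S ({e} : Finset E)))
    have h2 : Module.finrank (ZMod 2) ({x // x ∈ ({e} : Finset E)} → ZMod 2) = 1 := by
      rw [Module.finrank_pi (ZMod 2), Fintype.card_coe, Finset.card_singleton]
    omega
  have hge : 1 ≤ Module.finrank (ZMod 2) (LinearMap.range (resMap ε S {e})) := by
    by_contra h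
    push_neg at h
    have h3 : Module.finrank (ZMod 2) (LinearMap.range (resMap ε S ({e} : Finset E))) = 0 := by
      omega
    have h4 := Submodule.finrank_eq_zero.1 h3
    have h5 : resMap ε S {e} ⟨mchain C, mchain_mem_ZSp hC⟩ ∈
        LinearMap.range (resMap ε S {e}) := ⟨_, rfl⟩
    rw [h4, Submodule.mem_bot] at h5
    have h6 := congrFun h5 ⟨e, Finset.mem_singleton_self e⟩
    have h7 : mchain C e = 1 := mchain_apply_of_mem he
    simp only [resMap, LinearMap.funLeft, LinearMap.coe_comp, LinearMap.coe_mk, AddHom.coe_mk,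
      Function.comp_apply, Submodule.coe_subtype, Pi.zero_apply] at h6
    rw [h7] at h6
    exact one_ne_zero h6
  omega

/-- a weakly-fundamental list of (cycle, selected edge) pairs -/
def Valid (ε : E → Sym2 V) : Finset E → List (MCycle V E ε × E) → Prop
  | _, [] => True
  | S, p :: L => cycEdges p.1 ⊆ S ∧ p.2 ∈ cycEdges p.1 ∧ Valid ε (S.erase p.2) L

def endS (ε : E → Sym2 V) : Finset E → List (MCycle V E ε × E) → Finset E
  | S, [] => S
  | S, p :: L => endS ε (S.erase p.2) L

lemma valid_mono : ∀ (L : List (MCycle V E ε × E)) (S T : Finset E), S ⊆ T →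
    Valid ε S L → Valid ε T L := by
  intro L
  induction L with
  | nil => intro S T _ _; trivial
  | cons p L ih =>
    rintro S T hST ⟨h1, h2, h3⟩
    exact ⟨h1.trans hST, h2, ih _ _ (Finset.erase_subset_erase _ hST) h3⟩

lemma valid_edges : ∀ (L : List (MCycle V E ε × E)) (S : Finset E), Valid ε S L →
    ∀ p ∈ L, cycEdges p.1 ⊆ S := by
  intro L
  induction L with
  | nil => intro S _ p hp; exact absurd hp List.not_mem_nil
  | cons q L ih =>
    rintro S ⟨h1, h2, h3⟩ p hp
    rcases List.mem_cons.1 hp with rfl | hp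
    · exact h1
    · exact (ih _ h3 p hp).trans (Finset.erase_subset _ _)

lemma valid_append : ∀ (A B : List (MCycle V E ε × E)) (S : Finset E),
    Valid ε S A → Valid ε (endS ε S A) B → Valid ε S (A ++ B) := by
  intro A
  induction A with
  | nil => intro B S _ hB; exact hB
  | cons p A ih =>
    rintro B S ⟨h1, h2, h3⟩ hB
    exact ⟨h1, h2, ih B _ h3 hB⟩

lemma endS_append : ∀ (A B : List (MCycle V E ε × E)) (S : Finset E),
    endS ε S (A ++ B) = endS ε (endS ε S A) B := by
  intro A
  induction A with
  | nil => intro B S; rfl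
  | cons p A ih => intro B S; exact ih B _

lemma mu_endS : ∀ (L : List (MCycle V E ε × E)) (S : Finset E), Valid ε S L →
    mu ε (endS ε S L) + L.length = mu ε S := by
  intro L
  induction L with
  | nil => intro S _; simp [endS]
  | cons p L ih =>
    rintro S ⟨h1, h2, h3⟩
    have h4 := ih _ h3
    have h5 := mu_erase h1 h2
    have : endS ε S (p :: L) = endS ε (S.erase p.2) L := rfl
    rw [this]
    simp only [List.length_cons]
    omega

lemma span_of_valid : ∀ (L : List (MCycle V E ε × E)) (S : Finset E), Valid ε S L →
    ZSp ε (endS ε S L) = ⊥ →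
    ∀ c : E → ZMod 2, c ∈ ZSp ε S →
      c ∈ Submodule.span (ZMod 2) {x : E → ZMod 2 | ∃ p ∈ L, mchain p.1 = x} := by
  intro L
  induction L with
  | nil =>
    intro S _ hbot c hc
    have : c ∈ (⊥ : Submodule (ZMod 2) (E → ZMod 2)) := by
      rw [← hbot]
      exact hc
    rw [Submodule.mem_bot] at this
    rw [this]
    exact Submodule.zero_mem _
  | cons p L ih =>
    rintro S ⟨h1, h2, h3⟩ hbot c hc
    set c' := c + (c p.2) • mchain p.1 with hc'
    have hc'mem : c' ∈ ZSp ε S :=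
      (ZSp ε S).add_mem hc ((ZSp ε S).smul_mem _ (mchain_mem_ZSp h1))
    have hc'e : c' p.2 = 0 := by
      rw [hc']
      simp only [Pi.add_apply, Pi.smul_apply, smul_eq_mul]
      rw [mchain_apply_of_mem h2, mul_one]
      have : ∀ u : ZMod 2, u + u = 0 := by decide
      exact this _
    have hc'mem2 : c' ∈ ZSp ε (S.erase p.2) := by
      refine ⟨hc'mem.1, fun f hf => ?_⟩
      by_cases hfe : f = p.2
      · rw [hfe]; exact hc'e
      · refine hc'mem.2 f ?_
        intro hfS
        exact hf (Finset.mem_erase.2 ⟨hfe, hfS⟩)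
    have hrec := ih _ h3 hbot c' hc'mem2
    have hsub : {x : E → ZMod 2 | ∃ q ∈ L, mchain q.1 = x} ⊆
        {x : E → ZMod 2 | ∃ q ∈ p :: L, mchain q.1 = x} := by
      rintro x ⟨q, hq, rfl⟩
      exact ⟨q, List.mem_cons_of_mem _ hq, rfl⟩
    have hrec2 := Submodule.span_mono hsub hrec
    have hch : mchain p.1 ∈ Submodule.span (ZMod 2)
        {x : E → ZMod 2 | ∃ q ∈ p :: L, mchain q.1 = x} :=
      Submodule.subset_span ⟨p, List.mem_cons_self, rfl⟩
    have hcc : c = c' + (c p.2) • mchain p.1 := by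
      rw [hc']
      funext f
      simp only [Pi.add_apply, Pi.smul_apply, smul_eq_mul]
      have : ∀ u v : ZMod 2, u + v + v = u := by decide
      exact (this _ _).symm
    rw [hcc]
    exact Submodule.add_mem _ hrec2 (Submodule.smul_mem _ _ hch)

lemma indep_of_valid : ∀ (L : List (MCycle V E ε × E)) (S : Finset E), Valid ε S L →
    LinearIndependent (ZMod 2) (fun i : Fin L.length => mchain (L.get i).1) := by
  intro L
  induction L with
  | nil =>
    intro S _
    haveI : IsEmpty (Fin ([] : List (MCycle V E ε × E)).length) :=
      ⟨fun i => absurd i.isLt (by simp)⟩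
    exact linearIndependent_empty_type
  | cons p L ih =>
    rintro S ⟨h1, h2, h3⟩
    have htail := ih _ h3
    have heq : (fun i : Fin (p :: L).length => mchain ((p :: L).get i).1)
        = Fin.cons (mchain p.1) (fun i : Fin L.length => mchain (L.get i).1) := by
      funext i
      induction i using Fin.cases with
      | zero => rfl
      | succ i => rfl
    rw [heq, linearIndependent_fin_cons]
    refine ⟨htail, ?_⟩
    intro hmem
    have hvanish : Submodule.span (ZMod 2)
        (Set.range fun i : Fin L.length => mchain (L.get i).1) ≤
        LinearMap.ker (LinearMap.proj (R := ZMod 2) (φ := fun _ : E => ZMod 2) p.2) := by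
      rw [Submodule.span_le]
      rintro x ⟨i, rfl⟩
      have hLi : (L.get i) ∈ L := List.get_mem L i
      have hsub := valid_edges L _ h3 _ hLi
      have : p.2 ∉ cycEdges (L.get i).1 := by
        intro hmem2
        exact Finset.notMem_erase p.2 S (hsub hmem2)
      simp only [SetLike.mem_coe, LinearMap.mem_ker, LinearMap.proj_apply]
      exact mchain_apply_of_not_mem this
    have := hvanish hmem
    simp only [LinearMap.mem_ker, LinearMap.proj_apply] at this
    rw [mchain_apply_of_mem h2] at this
    exact one_ne_zero this

lemma wf_of_valid : ∀ (L : List (MCycle V E ε × E)) (S : Finset E), Valid ε S L →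
    ∀ (i j : ℕ) (hi : i < L.length) (hj : j < L.length), i < j →
      (L.get ⟨i, hi⟩).2 ∉ cycEdges (L.get ⟨j, hj⟩).1 := by
  intro L
  induction L with
  | nil => intro S _ i j hi; simp at hi
  | cons p L ih =>
    rintro S ⟨h1, h2, h3⟩ i j hi hj hij
    match i, j with
    | 0, (j' + 1) =>
      have hgi : ((p :: L).get ⟨0, hi⟩) = p := rfl
      have hgj : ((p :: L).get ⟨j' + 1, hj⟩) = L.get ⟨j', by simpa using hj⟩ := rfl
      rw [hgi, hgj]
      intro hmem
      have hsub := valid_edges L _ h3 _ (List.get_mem L ⟨j', by simpa using hj⟩)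
      exact Finset.notMem_erase p.2 S (hsub hmem)
    | (i' + 1), (j' + 1) =>
      have hgi : ((p :: L).get ⟨i' + 1, hi⟩) = L.get ⟨i', by simpa using hi⟩ := rfl
      have hgj : ((p :: L).get ⟨j' + 1, hj⟩) = L.get ⟨j', by simpa using hj⟩ := rfl
      rw [hgi, hgj]
      exact ih _ h3 i' j' _ _ (by omega)


/-! ### the round-counting function -/

noncomputable def Bfun (g m : ℕ) : ℕ :=
  2 * g * Nat.log 2 (m + 1) + (2 * g * (m + 1)) / 2 ^ (Nat.log 2 (m + 1))

lemma Bstep {g m m' : ℕ} (hg : 1 ≤ g) (hm : 1 ≤ m) (hle : m' + max 1 (m / g) ≤ m) :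
    1 + Bfun g m' ≤ Bfun g m := by
  set ℓ := Nat.log 2 (m + 1) with hℓ
  set ℓ' := Nat.log 2 (m' + 1) with hℓ'
  have hm'm : m' < m := by
    have h := le_max_left 1 (m / g)
    omega
  have hℓℓ' : ℓ' ≤ ℓ := Nat.log_mono_right (by omega)
  have hℓ1 : 1 ≤ ℓ := by
    rw [hℓ]
    exact (Nat.le_log_iff_pow_le (by norm_num) (by omega)).2 (by omega : 2 ^ 1 ≤ m + 1)
  have h2ℓ : 2 ^ ℓ ≤ m + 1 := Nat.pow_log_le_self 2 (by omega)
  have h2ℓ' : m' + 1 < 2 ^ (ℓ' + 1) := Nat.lt_pow_succ_log_self (by norm_num) _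
  have hkey : m + 1 ≤ 2 * g * (m - m') := by
    have h1 : max 1 (m / g) ≤ m - m' := by omega
    have h2 : m + 1 ≤ 2 * g * max 1 (m / g) := by
      rcases Nat.lt_or_ge m g with hmg | hmg
      · have h3 : m / g = 0 := Nat.div_eq_of_lt hmg
        have h4 : max 1 (m / g) = 1 := by omega
        rw [h4, Nat.mul_one]
        omega
      · have hq1 : 1 ≤ m / g := (Nat.one_le_div_iff (by omega)).2 hmg
        have h4 : max 1 (m / g) = m / g := by omega
        rw [h4]
        have h5 : m / g * g ≤ m := Nat.div_mul_le_self m g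
        have h6 : m < m / g * g + g := Nat.lt_div_mul_add (by omega)
        have h7 : g * 1 ≤ g * (m / g) := Nat.mul_le_mul_left g hq1
        have h8 : 2 * g * (m / g) = (m / g * g) + (m / g * g) := by ring
        rw [h8]
        have h9 : g ≤ m / g * g := by
          have : g * (m / g) = m / g * g := Nat.mul_comm _ _
          omega
        omega
    calc m + 1 ≤ 2 * g * max 1 (m / g) := h2
      _ ≤ 2 * g * (m - m') := Nat.mul_le_mul_left _ h1
  have hsplit : 2 * g * (m + 1) = 2 * g * (m' + 1) + 2 * g * (m - m') := by
    rw [← Nat.mul_add]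
    congr 1
    omega
  by_cases hcase : ℓ' = ℓ
  · rw [Bfun, Bfun, ← hℓ, ← hℓ', hcase]
    have hba : 2 * g * (m' + 1) + 2 ^ ℓ ≤ 2 * g * (m + 1) := by
      have h10 : 2 ^ ℓ ≤ 2 * g * (m - m') := le_trans h2ℓ hkey
      omega
    have hdiv : (2 * g * (m' + 1) + 2 ^ ℓ) / 2 ^ ℓ ≤ (2 * g * (m + 1)) / 2 ^ ℓ :=
      Nat.div_le_div_right hba
    rw [Nat.add_div_right _ (pow_pos (by norm_num) _)] at hdiv
    omega
  · have hℓ'ℓ : ℓ' + 1 ≤ ℓ := by omega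
    have hub : (2 * g * (m' + 1)) / 2 ^ ℓ' < 4 * g := by
      rw [Nat.div_lt_iff_lt_mul (pow_pos (by norm_num) _)]
      calc 2 * g * (m' + 1) < 2 * g * 2 ^ (ℓ' + 1) :=
            (Nat.mul_lt_mul_left (by omega : 0 < 2 * g)).2 h2ℓ'
        _ = 4 * g * 2 ^ ℓ' := by ring
    have hlb : 2 * g ≤ (2 * g * (m + 1)) / 2 ^ ℓ := by
      rw [Nat.le_div_iff_mul_le (pow_pos (by norm_num) _)]
      exact Nat.mul_le_mul_left _ h2ℓ
    rw [Bfun, Bfun, ← hℓ, ← hℓ']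
    have hmono : 2 * g * ℓ' + 2 * g ≤ 2 * g * ℓ := by
      calc 2 * g * ℓ' + 2 * g = 2 * g * (ℓ' + 1) := by ring
        _ ≤ 2 * g * ℓ := Nat.mul_le_mul_left _ hℓ'ℓ
    set A := 2 * g * ℓ with hA
    set A' := 2 * g * ℓ' with hA'
    set d := (2 * g * (m + 1)) / 2 ^ ℓ with hd
    set d' := (2 * g * (m' + 1)) / 2 ^ ℓ' with hd'
    omega

lemma Bfun_le (g m : ℕ) (hg : 1 ≤ g) : Bfun g m ≤ 2 * g * Nat.log 2 (m + 1) + 4 * g := by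
  rw [Bfun]
  have hub : (2 * g * (m + 1)) / 2 ^ (Nat.log 2 (m + 1)) < 4 * g := by
    rw [Nat.div_lt_iff_lt_mul (pow_pos (by norm_num) _)]
    calc 2 * g * (m + 1) < 2 * g * 2 ^ (Nat.log 2 (m + 1) + 1) :=
          (Nat.mul_lt_mul_left (by omega : 0 < 2 * g)).2 (Nat.lt_pow_succ_log_self (by norm_num) _)
      _ = 4 * g * 2 ^ (Nat.log 2 (m + 1)) := by ring
  set A := 2 * g * Nat.log 2 (m + 1)
  omega


/-! ### rounds and the main recursion -/

lemma round (g : ℕ) (hgK : 2 * Nat.log 2 (Fintype.card V) + 7 ≤ g) :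
    ∀ (m : ℕ) (S : Finset E), mu ε S = m →
    ∃ Lr : List (MCycle V E ε × E),
      Valid ε S Lr ∧ m ≤ g * Lr.length ∧
      (∀ f : E, (Lr.filter (fun p => f ∈ cycEdges p.1)).length ≤ 1) := by
  intro m
  induction m using Nat.strong_induction_on with
  | _ m ih =>
  intro S hm
  rcases Nat.eq_zero_or_pos m with rfl | hmpos
  · exact ⟨[], trivial, by omega, fun f => by simp⟩
  · obtain ⟨C, hCS, hCb⟩ := moore (ε := ε) S (by omega)
    obtain ⟨hdrop, hstrict⟩ := mu_drop S C hCS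
    set m' := mu ε (S \ cycEdges C) with hm'
    obtain ⟨Lr', hv', hlen', hcount'⟩ := ih m' (by omega) _ rfl
    set e := C.edg 0 with he
    have heC : e ∈ cycEdges C := edg_mem_cycEdges C C.npos
    have hsub : S \ cycEdges C ⊆ S.erase e := by
      intro f hf
      rw [Finset.mem_sdiff] at hf
      exact Finset.mem_erase.2 ⟨fun h => hf.2 (h ▸ heC), hf.1⟩
    refine ⟨(C, e) :: Lr', ⟨hCS, heC, valid_mono Lr' _ _ hsub hv'⟩, ?_, ?_⟩
    · rw [List.length_cons]
      set t := Lr'.length with ht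
      have hmul : g * (t + 1) = g * t + g := by ring
      rw [hmul]
      omega
    · intro f
      rw [List.filter_cons]
      by_cases hfC : f ∈ cycEdges C
      · have hnil : Lr'.filter (fun p => f ∈ cycEdges p.1) = [] := by
          rw [List.filter_eq_nil_iff]
          intro p hp
          have hsub2 := valid_edges Lr' _ hv' p hp
          simp only [decide_eq_true_eq]
          intro hmem
          exact (Finset.mem_sdiff.1 (hsub2 hmem)).2 hfC
        have hdec : decide (f ∈ cycEdges (((C, e) : MCycle V E ε × E)).1) = true := by
          simpa using hfC
        rw [if_pos hdec, List.length_cons, hnil, List.length_nil]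
      · have hdec : ¬ decide (f ∈ cycEdges (((C, e) : MCycle V E ε × E)).1) = true := by
          simpa using hfC
        rw [if_neg hdec]
        exact hcount' f

lemma main_rec (g : ℕ) (hg1 : 1 ≤ g) (hgK : 2 * Nat.log 2 (Fintype.card V) + 7 ≤ g) :
    ∀ (m : ℕ) (S : Finset E), mu ε S = m →
    ∃ L : List (MCycle V E ε × E),
      Valid ε S L ∧ mu ε (endS ε S L) = 0 ∧
      ∀ f : E, (L.filter (fun p => f ∈ cycEdges p.1)).length ≤ Bfun g m := by
  intro m
  induction m using Nat.strong_induction_on with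
  | _ m ih =>
  intro S hm
  rcases Nat.eq_zero_or_pos m with rfl | hmpos
  · exact ⟨[], trivial, hm, fun f => by simp⟩
  · obtain ⟨Lr, hvr, hlen, hcount1⟩ := round g hgK m S hm
    set t := Lr.length with ht
    have htpos : 1 ≤ t := by
      by_contra h
      push_neg at h
      interval_cases t
      omega
    have hmu2 : mu ε (endS ε S Lr) + t = m := by
      rw [← hm]
      exact mu_endS Lr S hvr
    set m₂ := mu ε (endS ε S Lr) with hm₂
    obtain ⟨L₂, hv₂, hend₂, hcount₂⟩ := ih m₂ (by omega) _ rfl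
    refine ⟨Lr ++ L₂, valid_append Lr L₂ S hvr hv₂, ?_, ?_⟩
    · rw [endS_append]
      exact hend₂
    · intro f
      rw [List.filter_append, List.length_append]
      have hB : 1 + Bfun g m₂ ≤ Bfun g m := by
        refine Bstep hg1 hmpos ?_
        have hdg : m / g ≤ t := by
          have h1 : m / g ≤ g * t / g := Nat.div_le_div_right hlen
          rw [Nat.mul_div_cancel_left t (by omega : 0 < g)] at h1
          exact h1
        omega
      have h1 := hcount1 f
      have h2 := hcount₂ f
      omega


/-! ### final bookkeeping -/

lemma valid_sel : ∀ (L : List (MCycle V E ε × E)) (S : Finset E), Valid ε S L →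
    ∀ i (hi : i < L.length), (L.get ⟨i, hi⟩).2 ∈ cycEdges (L.get ⟨i, hi⟩).1 := by
  intro L
  induction L with
  | nil => intro S _ i hi; simp at hi
  | cons p L ih =>
    rintro S ⟨h1, h2, h3⟩ i hi
    match i with
    | 0 => exact h2
    | (i' + 1) => exact ih _ h3 i' (by simpa using hi)

lemma sum_mdeg : ∑ x : V, mdeg ε x = 2 * Fintype.card E := by
  unfold mdeg
  rw [Finset.sum_comm]
  have hterm : ∀ f : E,
      (∑ x : V, if ε f = s(x, x) then 2 else if x ∈ ε f then 1 else 0) = 2 := by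
    intro f
    obtain ⟨a, b, hab⟩ := sym2_rep (ε f)
    by_cases hd : a = b
    · subst hd
      have : ∀ x : V, (if ε f = s(x, x) then 2 else if x ∈ ε f then 1 else 0)
          = if x = a then 2 else 0 := by
        intro x
        by_cases hx : x = a
        · subst hx
          rw [if_pos rfl, if_pos hab]
        · rw [if_neg hx, if_neg, if_neg]
          · intro hmem
            rw [hab, Sym2.mem_iff] at hmem
            tauto
          · rw [hab]
            intro h
            rw [Sym2.eq_iff] at h
            tauto
      rw [Finset.sum_congr rfl fun x _ => this x]
      rw [Finset.sum_ite_eq' Finset.univ a (fun _ => 2)]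
      rw [if_pos (mem_univ a)]
    · have : ∀ x : V, (if ε f = s(x, x) then 2 else if x ∈ ε f then 1 else 0)
          = if x = a ∨ x = b then 1 else 0 := by
        intro x
        have hnl : ε f ≠ s(x, x) := by
          rw [hab]
          intro h
          rw [Sym2.eq_iff] at h
          rcases h with ⟨h1, h2⟩ | ⟨h1, h2⟩ <;> exact hd (by rw [h1, h2])
        rw [if_neg hnl]
        by_cases hx : x = a ∨ x = b
        · rw [if_pos hx, if_pos]
          rw [hab, Sym2.mem_iff]
          tauto
        · rw [if_neg hx, if_neg]
          rw [hab, Sym2.mem_iff]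
          tauto
      rw [Finset.sum_congr rfl fun x _ => this x]
      have hsum : (∑ x : V, if x = a ∨ x = b then (1:ℕ) else 0)
          = (if a = a ∨ a = b then (1:ℕ) else 0) + (if b = a ∨ b = b then (1:ℕ) else 0) := by
        refine Finset.sum_eq_add_of_mem a b (mem_univ a) (mem_univ b) hd ?_
        intro c _ hc
        rw [if_neg (by tauto)]
      rw [hsum, if_pos (Or.inl rfl), if_pos (Or.inr rfl)]
  rw [Finset.sum_congr rfl fun f _ => hterm f]
  rw [Finset.sum_const, smul_eq_mul, Finset.card_univ, Nat.mul_comm]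

lemma mu_le_card (S : Finset E) : mu ε S ≤ Fintype.card E := by
  have h1 := Submodule.finrank_le (ZSp ε S)
  rwa [Module.finrank_pi (ZMod 2)] at h1

lemma count_fin (f : E) : ∀ (L : List (MCycle V E ε × E)),
    (Finset.univ.filter fun i : Fin L.length => inCyc (L.get i).1 f).card
      = (L.filter fun p => f ∈ cycEdges p.1).length := by
  intro L
  induction L with
  | nil => simp
  | cons p L ih =>
    rw [List.filter_cons, Finset.card_filter]
    have hch : (∑ i : Fin (p :: L).length, if inCyc ((p :: L).get i).1 f then (1:ℕ) else 0)
        = ∑ i : Fin (L.length + 1), if inCyc ((p :: L).get i).1 f then (1:ℕ) else 0 := rfl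
    rw [hch, Fin.sum_univ_succ]
    have htail : (∑ i : Fin L.length, if inCyc ((p :: L).get i.succ).1 f then (1:ℕ) else 0)
        = (∑ i : Fin L.length, if inCyc (L.get i).1 f then (1:ℕ) else 0) := rfl
    rw [htail, ← Finset.card_filter, ih]
    by_cases h : f ∈ cycEdges p.1
    · have h1 : inCyc ((p :: L).get (0 : Fin (L.length + 1))).1 f := inCyc_iff_mem.2 h
      have h2 : decide (f ∈ cycEdges (p.1)) = true := by simpa using h
      rw [if_pos h1, if_pos h2, List.length_cons]
      omega
    · have h1 : ¬ inCyc ((p :: L).get (0 : Fin (L.length + 1))).1 f :=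
        fun hc => h (inCyc_iff_mem.1 hc)
      have h2 : ¬ decide (f ∈ cycEdges (p.1)) = true := by simpa using h
      rw [if_neg h1, if_neg h2]
      omega


end Decon

/-- Decongestion lemma: for every degree bound `D` there is a constant `cst` such
that every finite multigraph with all degrees at most `D` has a weakly fundamental
cycle basis in which each edge appears in at most `cst·(log₂ V)² + cst` cycles. -/
theorem stmt_9 (D : ℕ) :
    ∃ cst : ℕ, ∀ (V E : Type) [Fintype V] [Fintype E] [DecidableEq V] [DecidableEq E],
      ∀ ε : E → Sym2 V, (∀ x : V, mdeg ε x ≤ D) →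
      ∃ (k : ℕ) (C : Fin k → MCycle V E ε),
        LinearIndependent (ZMod 2) (fun i => mchain (C i)) ∧
        (∀ c : E → ZMod 2, cycleCondM ε c →
          c ∈ Submodule.span (ZMod 2) (Set.range fun i => mchain (C i))) ∧
        (∃ sel : Fin k → E, (∀ i, inCyc (C i) (sel i)) ∧
          ∀ i j, i < j → ¬ inCyc (C j) (sel i)) ∧
        (∀ f : E, (Finset.univ.filter fun i : Fin k => inCyc (C i) f).card ≤
          cst * (Nat.log 2 (Fintype.card V)) ^ 2 + cst) := by
  open Decon Finset in
  refine ⟨18 * (Nat.log 2 (D + 1) + 1) + 100, ?_⟩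
  intro V E _ _ _ _ ε hdeg
  set L := Nat.log 2 (Fintype.card V) with hL
  set d := Nat.log 2 (D + 1) + 1 with hd
  set g := 2 * L + 7 with hg
  obtain ⟨Lst, hval, hend, hcount⟩ :=
    Decon.main_rec (ε := ε) g (by omega) (by omega) (Decon.mu ε Finset.univ) Finset.univ rfl
  refine ⟨Lst.length, fun i => (Lst.get i).1, ?_, ?_, ?_, ?_⟩
  · exact Decon.indep_of_valid Lst Finset.univ hval
  · intro c hc
    have h1 : c ∈ Decon.ZSp ε Finset.univ := ⟨hc, fun f hf => absurd (Finset.mem_univ f) hf⟩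
    have h2 := Decon.span_of_valid Lst Finset.univ hval
      (Decon.ZSp_eq_bot_of_mu_zero hend) c h1
    have hset : {x : E → ZMod 2 | ∃ p ∈ Lst, mchain p.1 = x}
        = Set.range (fun i : Fin Lst.length => mchain (Lst.get i).1) := by
      ext x
      constructor
      · rintro ⟨p, hp, rfl⟩
        obtain ⟨i, rfl⟩ := List.mem_iff_get.1 hp
        exact ⟨i, rfl⟩
      · rintro ⟨i, rfl⟩
        exact ⟨Lst.get i, List.get_mem _ _, rfl⟩
    rwa [hset] at h2
  · refine ⟨fun i => (Lst.get i).2, ?_, ?_⟩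
    · intro i
      exact Decon.inCyc_iff_mem.2 (Decon.valid_sel Lst Finset.univ hval i.1 i.2)
    · intro i j hij hin
      exact Decon.wf_of_valid Lst Finset.univ hval i.1 j.1 i.2 j.2 hij
        (Decon.inCyc_iff_mem.1 hin)
  · intro f
    rw [Decon.count_fin f Lst]
    set m := Decon.mu ε Finset.univ with hm
    have hB := hcount f
    have hB2 := Decon.Bfun_le g m (by omega)
    -- edge count bound
    have hsum : ∑ x : V, mdeg ε x ≤ Fintype.card V * D := by
      have := Finset.sum_le_card_nsmul Finset.univ (fun x => mdeg ε x) D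
        (fun x _ => hdeg x)
      simpa [Finset.card_univ] using this
    have hEV : 2 * Fintype.card E ≤ Fintype.card V * D := by
      rw [← Decon.sum_mdeg (ε := ε)]
      exact hsum
    have hmE : m ≤ Fintype.card E := Decon.mu_le_card Finset.univ
    have hV : Fintype.card V < 2 ^ (L + 1) := Nat.lt_pow_succ_log_self (by norm_num) _
    have hD : D + 1 ≤ 2 ^ d := le_of_lt (Nat.lt_pow_succ_log_self (by norm_num) _)
    -- m + 1 ≤ (D+1) * 2^L
    have hm3 : m + 1 ≤ (D + 1) * 2 ^ L := by
      have h1 : 2 * (m + 1) ≤ Fintype.card V * D + 2 := by omega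
      have h2 : Fintype.card V * D ≤ (2 ^ (L + 1) - 1) * D :=
        Nat.mul_le_mul_right D (by omega)
      have h3 : (2 ^ (L + 1) - 1) * D + 2 ≤ (D + 1) * 2 ^ (L + 1) := by
        have h4 : 1 ≤ 2 ^ (L + 1) := Nat.one_le_two_pow
        have h5 : (2 ^ (L + 1) - 1) * D ≤ 2 ^ (L + 1) * D := Nat.mul_le_mul_right D (by omega)
        have h6 : (D + 1) * 2 ^ (L + 1) = 2 ^ (L + 1) * D + 2 ^ (L + 1) := by ring
        have h7 : 2 ≤ 2 ^ (L + 1) := by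
          calc 2 = 2 ^ 1 := rfl
            _ ≤ 2 ^ (L + 1) := Nat.pow_le_pow_right (by norm_num) (by omega)
        omega
      have h8 : (D + 1) * 2 ^ (L + 1) = 2 * ((D + 1) * 2 ^ L) := by
        rw [pow_succ]
        ring
      omega
    have hlog : Nat.log 2 (m + 1) ≤ d + L := by
      have h1 : m + 1 ≤ 2 ^ (d + L) := by
        calc m + 1 ≤ (D + 1) * 2 ^ L := hm3
          _ ≤ 2 ^ d * 2 ^ L := Nat.mul_le_mul_right _ hD
          _ = 2 ^ (d + L) := (pow_add 2 d L).symm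
      calc Nat.log 2 (m + 1) ≤ Nat.log 2 (2 ^ (d + L)) := Nat.log_mono_right h1
        _ = d + L := Nat.log_pow (b := 2) (by norm_num) (d + L)
    -- final arithmetic
    have hfinal : 2 * g * Nat.log 2 (m + 1) + 4 * g
        ≤ (18 * d + 100) * L ^ 2 + (18 * d + 100) := by
      have h1 : 2 * g * Nat.log 2 (m + 1) ≤ 2 * g * (d + L) :=
        Nat.mul_le_mul_left _ hlog
      have hL1 : L ≤ L * L + 1 := by
        rcases Nat.eq_zero_or_pos L with h | h
        · omega
        · have : L * 1 ≤ L * L := Nat.mul_le_mul_left L h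
          omega
      have hLd : L * d ≤ L * L * d + d := by
        calc L * d ≤ (L * L + 1) * d := Nat.mul_le_mul_right d hL1
          _ = L * L * d + d := by ring
      have hexp : 2 * g * (d + L) + 4 * g
          = 4 * (L * L) + 4 * (L * d) + 22 * L + 14 * d + 28 := by
        rw [hg]
        ring
      have hgoal : (18 * d + 100) * L ^ 2 + (18 * d + 100)
          = 18 * (L * L * d) + 100 * (L * L) + 18 * d + 100 := by
        ring
      rw [hgoal]
      have h2 : 2 * g * Nat.log 2 (m + 1) + 4 * g ≤ 2 * g * (d + L) + 4 * g := by omega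
      refine le_trans h2 ?_
      rw [hexp]
      have h22 : 22 * L ≤ 22 * (L * L) + 22 := by omega
      set Z := L * L * d with hZ
      set X := L * L with hX
      set Y := L * d with hY
      omega
    omega
end

section
/- Let c be a smooth (or rectifiable) k-chain in the closed unit ball B^n ⊂ ℝ^n with k < n, whose boundary ∂c lies in the sphere S^{n−1}. For a point p in the interior of B^n not meeting c, let f_p : B^n ∖ {p} → S^{n−1} be the radial-ray projection sending x to the point where the ray from x through p (extended beyond p) meets S^{n−1}. Then the expectation over p chosen uniformly in the ball of radius 1/2 of the k-area of f_p(c) is bounded by a constant C(n,k) times the k-area of c. -/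
open MeasureTheory ENNReal Metric Set
open scoped Classical NNReal RealInnerProductSpace

/-- Radial-ray projection: the point where the ray starting at `x`, passing through
`p` and continuing beyond it, meets the unit sphere (junk value `x` if no such
point exists). -/
noncomputable def rayProj {n : ℕ} (p x : EuclideanSpace ℝ (Fin n)) :
    EuclideanSpace ℝ (Fin n) :=
  if h : ∃ t : ℝ, 1 ≤ t ∧ ‖x + t • (p - x)‖ = 1 then x + h.choose • (p - x) else x

section Aux

noncomputable def sVal {n : ℕ} (p u : EuclideanSpace ℝ (Fin n)) : ℝ :=
  -⟪p, u⟫ + Real.sqrt (⟪p, u⟫ ^ 2 + 1 - ‖p‖ ^ 2)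

noncomputable def gMap {n : ℕ} (p u : EuclideanSpace ℝ (Fin n)) : EuclideanSpace ℝ (Fin n) :=
  p + sVal p u • u

lemma sVal_nonneg {n : ℕ} {p u : EuclideanSpace ℝ (Fin n)} (hp : ‖p‖ < 1) : 0 ≤ sVal p u := by
  have h1 : |⟪p, u⟫| ≤ Real.sqrt (⟪p, u⟫ ^ 2 + 1 - ‖p‖ ^ 2) := by
    rw [← Real.sqrt_sq_eq_abs]
    exact Real.sqrt_le_sqrt (by nlinarith [norm_nonneg p])
  have := le_abs_self ⟪p, u⟫
  unfold sVal; linarith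

lemma norm_gMap {n : ℕ} {p u : EuclideanSpace ℝ (Fin n)} (hp : ‖p‖ < 1) (hu : ‖u‖ = 1) :
    ‖gMap p u‖ = 1 := by
  have ha : (0:ℝ) ≤ ⟪p, u⟫ ^ 2 + 1 - ‖p‖ ^ 2 := by nlinarith [sq_nonneg ⟪p, u⟫, norm_nonneg p]
  have hs := Real.sq_sqrt ha
  have hsq : ‖gMap p u‖ ^ 2 = 1 := by
    rw [gMap, norm_add_sq_real, real_inner_smul_right, norm_smul, Real.norm_eq_abs,
      mul_pow, sq_abs, hu]
    unfold sVal
    nlinarith [hs]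
  have h0 : (0:ℝ) ≤ ‖gMap p u‖ := norm_nonneg _
  nlinarith

lemma eq_gMap_of {n : ℕ} {p u : EuclideanSpace ℝ (Fin n)} (hp : ‖p‖ < 1) (hu : ‖u‖ = 1)
    {s' : ℝ} (hs' : 0 ≤ s') (hn : ‖p + s' • u‖ = 1) : p + s' • u = gMap p u := by
  set s := sVal p u with hsdef
  have hs0 : 0 ≤ s := sVal_nonneg hp
  have hgn : ‖gMap p u‖ = 1 := norm_gMap hp hu
  -- both s and s' satisfy the quadratic
  have hq : s ^ 2 + 2 * ⟪p, u⟫ * s + (‖p‖ ^ 2 - 1) = 0 := by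
    have : ‖p + s • u‖ ^ 2 = 1 := by rw [show p + s • u = gMap p u from rfl, hgn]; norm_num
    rw [norm_add_sq_real, real_inner_smul_right, norm_smul, Real.norm_eq_abs, mul_pow,
      sq_abs, hu] at this
    nlinarith [this]
  have hq' : s' ^ 2 + 2 * ⟪p, u⟫ * s' + (‖p‖ ^ 2 - 1) = 0 := by
    have : ‖p + s' • u‖ ^ 2 = 1 := by rw [hn]; norm_num
    rw [norm_add_sq_real, real_inner_smul_right, norm_smul, Real.norm_eq_abs, mul_pow,
      sq_abs, hu] at this
    nlinarith [this]
  have hss : s' = s := by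
    have hfac : (s - s') * (s + s' + 2 * ⟪p, u⟫) = 0 := by linear_combination hq - hq'
    rcases mul_eq_zero.1 hfac with h | h
    · linarith [sub_eq_zero.1 h]
    · exfalso
      have h2 : s * (s + s' + 2 * ⟪p, u⟫) = 0 := by rw [h, mul_zero]
      have h3 : ‖p‖ ^ 2 - 1 = s * s' := by linear_combination hq - h2
      nlinarith [mul_nonneg hs0 hs', norm_nonneg p]
  rw [hss]; rfl

lemma rayProj_eq' {n : ℕ} {p x : EuclideanSpace ℝ (Fin n)} (hp : ‖p‖ < 1) (hxp : x ≠ p) :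
    rayProj p x = gMap p (‖p - x‖⁻¹ • (p - x)) := by
  have hd : p - x ≠ 0 := sub_ne_zero.2 (Ne.symm hxp)
  have hdn : (0:ℝ) < ‖p - x‖ := norm_pos_iff.2 hd
  set u : EuclideanSpace ℝ (Fin n) := ‖p - x‖⁻¹ • (p - x) with hudef
  have hu : ‖u‖ = 1 := by
    rw [hudef, norm_smul, norm_inv, norm_norm, inv_mul_cancel₀ hdn.ne']
  have hkey : ∀ t : ℝ, x + t • (p - x) = p + ((t - 1) * ‖p - x‖) • u := by
    intro t
    rw [hudef, smul_smul, mul_assoc, mul_inv_cancel₀ hdn.ne', mul_one, sub_smul, one_smul]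
    abel
  have hex : ∃ t : ℝ, 1 ≤ t ∧ ‖x + t • (p - x)‖ = 1 := by
    refine ⟨1 + sVal p u / ‖p - x‖,
      le_add_of_nonneg_right (div_nonneg (sVal_nonneg hp) hdn.le), ?_⟩
    rw [hkey, show (1 + sVal p u / ‖p - x‖ - 1) * ‖p - x‖ = sVal p u by field_simp; ring]
    exact norm_gMap hp hu
  rw [rayProj, dif_pos hex]
  obtain ⟨ht1, htn⟩ := hex.choose_spec
  rw [hkey] at htn ⊢
  exact eq_gMap_of hp hu (mul_nonneg (by linarith) hdn.le) htn

set_option maxHeartbeats 1000000 in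
lemma key_real (g g' P D : ℝ) (hP0 : 0 ≤ P) (hP : P ≤ 1/2) (hD : 0 ≤ D)
    (hg : |g| ≤ 1/2) (hg' : |g'| ≤ 1/2) (hdiff : |g - g'| ≤ 1/2 * D) :
    |(-g + Real.sqrt (g^2+1-P^2)) - (-g' + Real.sqrt (g'^2+1-P^2))| ≤ 3/2 * D ∧
      |(-g' + Real.sqrt (g'^2+1-P^2))| ≤ 2 := by
  set a := g^2+1-P^2 with ha
  set a' := g'^2+1-P^2 with ha'
  have hgs : g^2 ≤ 1/4 := by nlinarith [sq_abs g, abs_nonneg g]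
  have hgs' : g'^2 ≤ 1/4 := by nlinarith [sq_abs g', abs_nonneg g']
  have hP2 : P^2 ≤ 1/4 := by nlinarith
  have haL : 3/4 ≤ a := by nlinarith [sq_nonneg g, sq_nonneg P]
  have haL' : 3/4 ≤ a' := by nlinarith [sq_nonneg g', sq_nonneg P]
  have haU : a ≤ 5/4 := by nlinarith [sq_nonneg P]
  have haU' : a' ≤ 5/4 := by nlinarith [sq_nonneg P]
  set sa := Real.sqrt a with hsa
  set sa' := Real.sqrt a' with hsa'
  have hsa2 : sa ^ 2 = a := Real.sq_sqrt (by linarith)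
  have hsa2' : sa' ^ 2 = a' := Real.sq_sqrt (by linarith)
  have hsa0 : 0 ≤ sa := hsa ▸ Real.sqrt_nonneg a
  have hsa0' : 0 ≤ sa' := hsa' ▸ Real.sqrt_nonneg a'
  clear_value sa sa'
  have hsaL : 1/2 ≤ sa := by nlinarith
  have hsaL' : 1/2 ≤ sa' := by nlinarith
  have hsaU : sa ≤ 3/2 := by nlinarith [sq_nonneg (sa - 3/2)]
  have hsaU' : sa' ≤ 3/2 := by nlinarith [sq_nonneg (sa' - 3/2)]
  have haa' : |a - a'| ≤ D := by
    have heq : a - a' = (g + g') * (g - g') := by rw [ha, ha']; ring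
    rw [heq, abs_mul]
    have h1 : |g + g'| ≤ 1 := (abs_add_le _ _).trans (by linarith)
    nlinarith [abs_nonneg (g - g'), abs_nonneg (g + g')]
  have hss' : |sa - sa'| ≤ |a - a'| := by
    have hsum : 1 ≤ sa + sa' := by linarith
    have hdiff2 : (sa - sa') * (sa + sa') = a - a' := by nlinarith
    calc |sa - sa'| ≤ |sa - sa'| * (sa + sa') :=
          le_mul_of_one_le_right (abs_nonneg _) hsum
      _ = |(sa - sa') * (sa + sa')| := by
          rw [abs_mul, abs_of_nonneg (by linarith : (0:ℝ) ≤ sa + sa')]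
      _ = |a - a'| := by rw [hdiff2]
  constructor
  · have heq : (-g + sa) - (-g' + sa') = -(g - g') + (sa - sa') := by ring
    rw [heq]
    calc |(-(g - g')) + (sa - sa')| ≤ |g - g'| + |sa - sa'| := by
          have h := abs_add_le (-(g - g')) (sa - sa'); rwa [abs_neg] at h
      _ ≤ 3/2 * D := by have := hss'.trans haa'; linarith
  · calc |(-g') + sa'| ≤ |g'| + |sa'| := by
          have h := abs_add_le (-g') sa'; rwa [abs_neg] at h
      _ ≤ 2 := by rw [abs_of_nonneg hsa0']; linarith

lemma gMap_lip {n : ℕ} {p : EuclideanSpace ℝ (Fin n)} (hp : ‖p‖ ≤ 1/2) :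
    LipschitzOnWith 4 (gMap p) (closedBall 0 1) := by
  rw [lipschitzOnWith_iff_dist_le_mul]
  intro u hu v hv
  rw [mem_closedBall, dist_zero_right] at hu hv
  rw [dist_eq_norm, dist_eq_norm]
  have hpn : (0:ℝ) ≤ ‖p‖ := norm_nonneg p
  have hgu : |⟪p, u⟫| ≤ 1/2 := (abs_real_inner_le_norm p u).trans (by nlinarith)
  have hgv : |⟪p, v⟫| ≤ 1/2 := (abs_real_inner_le_norm p v).trans (by nlinarith)
  have hnn : (0:ℝ) ≤ ‖u - v‖ := norm_nonneg _
  have hdiff : |⟪p, u⟫ - ⟪p, v⟫| ≤ 1/2 * ‖u - v‖ := by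
    rw [← inner_sub_right]
    exact (abs_real_inner_le_norm _ _).trans (by nlinarith [norm_nonneg (u - v)])
  obtain ⟨h1, h2⟩ := key_real ⟪p, u⟫ ⟪p, v⟫ ‖p‖ ‖u - v‖ hpn hp hnn hgu hgv hdiff
  have hsd : |sVal p u - sVal p v| ≤ 3/2 * ‖u - v‖ := h1
  have hsv : |sVal p v| ≤ 2 := h2
  have hsplit : gMap p u - gMap p v = (sVal p u - sVal p v) • u + sVal p v • (u - v) := by
    unfold gMap; rw [sub_smul, smul_sub]; abel
  rw [hsplit]
  calc ‖(sVal p u - sVal p v) • u + sVal p v • (u - v)‖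
      ≤ ‖(sVal p u - sVal p v) • u‖ + ‖sVal p v • (u - v)‖ := norm_add_le _ _
    _ = |sVal p u - sVal p v| * ‖u‖ + |sVal p v| * ‖u - v‖ := by
        rw [norm_smul, norm_smul, Real.norm_eq_abs, Real.norm_eq_abs]
    _ ≤ 3/2 * ‖u - v‖ * 1 + 2 * ‖u - v‖ := by
        have h0 : (0:ℝ) ≤ ‖u‖ := norm_nonneg _
        nlinarith [abs_nonneg (sVal p u - sVal p v), abs_nonneg (sVal p v)]
    _ ≤ ((4:ℝ≥0):ℝ) * ‖u - v‖ := by push_cast; linarith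

lemma lipschitzOnWith_congr {α β : Type*} [PseudoEMetricSpace α] [PseudoEMetricSpace β]
    {K : ℝ≥0} {f g : α → β} {s : Set α} (h : LipschitzOnWith K f s) (he : Set.EqOn f g s) :
    LipschitzOnWith K g s := fun x hx y hy => by
  rw [← he hx, ← he hy]; exact h hx hy

lemma normalize_lip {r : ℝ} (hr : 0 < r) (K : ℝ≥0) (hK : 2 ≤ (K:ℝ) * r) :
    LipschitzOnWith K (fun y : EuclideanSpace ℝ (Fin n) => ‖y‖⁻¹ • y) {y | r ≤ ‖y‖} := by
  rw [lipschitzOnWith_iff_dist_le_mul]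
  intro y hy z hz
  simp only [mem_setOf_eq] at hy hz
  have hy0 : (0:ℝ) < ‖y‖ := lt_of_lt_of_le hr hy
  have hz0 : (0:ℝ) < ‖z‖ := lt_of_lt_of_le hr hz
  rw [dist_eq_norm, dist_eq_norm]
  have h1 : ‖y‖⁻¹ • y - ‖z‖⁻¹ • z = ‖y‖⁻¹ • (y - (‖y‖ / ‖z‖) • z) := by
    rw [smul_sub, smul_smul]
    congr 2
    field_simp
  have h2 : ‖y - (‖y‖ / ‖z‖) • z‖ ≤ 2 * ‖y - z‖ := by
    have hsplit : y - (‖y‖ / ‖z‖) • z = (y - z) + ((‖z‖ - ‖y‖) / ‖z‖) • z := by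
      rw [sub_div, div_self hz0.ne', sub_smul, one_smul]
      abel
    rw [hsplit]
    have h3 : ‖((‖z‖ - ‖y‖) / ‖z‖) • z‖ = |‖z‖ - ‖y‖| := by
      rw [norm_smul, Real.norm_eq_abs, abs_div, abs_of_pos hz0, div_mul_cancel₀ _ hz0.ne']
    have h4 : |‖z‖ - ‖y‖| ≤ ‖y - z‖ := by
      rw [norm_sub_rev y z]
      exact abs_norm_sub_norm_le z y
    calc ‖(y - z) + ((‖z‖ - ‖y‖) / ‖z‖) • z‖ ≤ ‖y - z‖ + ‖((‖z‖ - ‖y‖) / ‖z‖) • z‖ :=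
          norm_add_le _ _
      _ ≤ 2 * ‖y - z‖ := by rw [h3]; linarith
  calc ‖‖y‖⁻¹ • y - ‖z‖⁻¹ • z‖ = ‖y‖⁻¹ * ‖y - (‖y‖ / ‖z‖) • z‖ := by
        rw [h1, norm_smul, Real.norm_eq_abs, abs_of_pos (inv_pos.2 hy0)]
    _ ≤ r⁻¹ * (2 * ‖y - z‖) := by
        apply mul_le_mul (inv_anti₀ hr hy) h2 (norm_nonneg _) (by positivity)
    _ ≤ (K:ℝ) * ‖y - z‖ := by
        have hK' : r⁻¹ * 2 ≤ (K:ℝ) := by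
          rw [inv_mul_eq_div, div_le_iff₀ hr] at *
          linarith
        nlinarith [norm_nonneg (y - z), inv_pos.2 hr]

lemma rayProj_lip {n : ℕ} {p : EuclideanSpace ℝ (Fin n)} (hp : ‖p‖ ≤ 1/2) {r : ℝ} (hr : 0 < r)
    (K : ℝ≥0) (hK : 2 ≤ (K:ℝ) * r) :
    LipschitzOnWith (4 * K) (rayProj p) {x | r ≤ dist x p} := by
  have hp1 : ‖p‖ < 1 := lt_of_le_of_lt hp (by norm_num)
  have hsub : LipschitzWith 1 (fun x : EuclideanSpace ℝ (Fin n) => p - x) :=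
    LipschitzWith.of_dist_le_mul fun x y => by
      rw [dist_sub_left p x y]
      simp
  have hmaps1 : MapsTo (fun x : EuclideanSpace ℝ (Fin n) => p - x) {x | r ≤ dist x p}
      {y | r ≤ ‖y‖} := by
    intro x hx
    simp only [mem_setOf_eq] at *
    rwa [← norm_sub_rev, ← dist_eq_norm]
  have hcomp1 : LipschitzOnWith (K * 1)
      (fun x : EuclideanSpace ℝ (Fin n) => ‖p - x‖⁻¹ • (p - x)) {x | r ≤ dist x p} :=
    (normalize_lip hr K hK).comp (hsub.lipschitzOnWith (s := {x | r ≤ dist x p})) hmaps1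
  have hmaps2 : MapsTo (fun x : EuclideanSpace ℝ (Fin n) => ‖p - x‖⁻¹ • (p - x))
      {x | r ≤ dist x p} (closedBall 0 1) := by
    intro x hx
    simp only [mem_setOf_eq] at hx
    have hxp : x ≠ p := by
      intro h
      rw [h, dist_self] at hx
      linarith
    have hpx : p - x ≠ 0 := sub_ne_zero.2 (Ne.symm hxp)
    have : ‖p - x‖ ≠ 0 := norm_ne_zero_iff.2 hpx
    rw [mem_closedBall, dist_zero_right, norm_smul, norm_inv, norm_norm,
      inv_mul_cancel₀ this]
  have hcomp2 : LipschitzOnWith (4 * (K * 1))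
      ((gMap p) ∘ fun x : EuclideanSpace ℝ (Fin n) => ‖p - x‖⁻¹ • (p - x))
      {x | r ≤ dist x p} := (gMap_lip hp).comp hcomp1 hmaps2
  rw [show (4 : ℝ≥0) * K = 4 * (K * 1) by rw [mul_one]]
  apply lipschitzOnWith_congr hcomp2
  intro x hx
  simp only [mem_setOf_eq] at hx
  have hxp : x ≠ p := by
    intro h
    rw [h, dist_self] at hx
    linarith
  exact (rayProj_eq' hp1 hxp).symm


def annulus {n : ℕ} (j : ℕ) (p : EuclideanSpace ℝ (Fin n)) : Set (EuclideanSpace ℝ (Fin n)) :=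
  {x | (1/2:ℝ)^j ≤ dist x p ∧ dist x p < 2 * (1/2:ℝ)^j}

lemma measurableSet_annulus {n : ℕ} (j : ℕ) (p : EuclideanSpace ℝ (Fin n)) :
    MeasurableSet (annulus j p) := by
  have h : annulus j p = (fun x => dist x p) ⁻¹' (Ico ((1/2:ℝ)^j) (2 * (1/2:ℝ)^j)) := by
    ext x; simp [annulus, mem_Ico]
  rw [h]
  exact (Continuous.dist continuous_id continuous_const).measurable measurableSet_Ico

lemma measurableSet_annulus_prod {n : ℕ} (j : ℕ) :
    MeasurableSet {q : EuclideanSpace ℝ (Fin n) × EuclideanSpace ℝ (Fin n) |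
      q.2 ∈ annulus j q.1} := by
  have h : {q : EuclideanSpace ℝ (Fin n) × EuclideanSpace ℝ (Fin n) | q.2 ∈ annulus j q.1}
      = (fun q : EuclideanSpace ℝ (Fin n) × EuclideanSpace ℝ (Fin n) => dist q.2 q.1) ⁻¹'
        (Ico ((1/2:ℝ)^j) (2 * (1/2:ℝ)^j)) := by
    ext q; simp [annulus, mem_Ico]
  rw [h]
  exact (Continuous.dist continuous_snd continuous_fst).measurable measurableSet_Ico

lemma hK_arith (j : ℕ) : 2 ≤ (((2:ℝ≥0)^(j+1) : ℝ≥0) : ℝ) * (1/2:ℝ)^j := by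
  push_cast
  have h : (2:ℝ)^(j+1) * (1/2)^j = 2 := by
    rw [one_div, inv_pow, pow_succ]
    field_simp
  rw [h]

lemma image_annulus_le {n k : ℕ} {p : EuclideanSpace ℝ (Fin n)} (hp : ‖p‖ ≤ 1/2)
    (c : Set (EuclideanSpace ℝ (Fin n))) (j : ℕ) :
    μH[(k:ℝ)] (rayProj p '' (c ∩ annulus j p)) ≤
      ((4 * (2:ℝ≥0)^(j+1) : ℝ≥0) : ℝ≥0∞)^k * μH[(k:ℝ)] (c ∩ annulus j p) := by
  have hlip := (rayProj_lip hp (r := (1/2:ℝ)^j) (by positivity) ((2:ℝ≥0)^(j+1))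
    (hK_arith j)).mono (s := c ∩ annulus j p) (fun x hx => hx.2.1)
  have h := hlip.hausdorffMeasure_image_le (by positivity : (0:ℝ) ≤ (k:ℝ))
  rwa [ENNReal.rpow_natCast] at h

end Aux

/-- Pushing a `k`-chain in the unit ball to the boundary sphere: the expectation,
over `p` chosen uniformly in the ball of radius `1/2`, of the `k`-area of the
radial-ray projection `f_p(c)` is bounded by a constant `C(n,k)` times the
`k`-area of `c`. -/
theorem stmt_12 (n k : ℕ) (hk : k < n) :
    ∃ C : ℝ≥0∞, C ≠ ⊤ ∧
      ∀ c : Set (EuclideanSpace ℝ (Fin n)), MeasurableSet c →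
        c ⊆ Metric.closedBall 0 1 →
        (∫⁻ p in Metric.ball (0 : EuclideanSpace ℝ (Fin n)) (1 / 2),
            μH[(k : ℝ)] ((fun x => rayProj p x) '' c)) ≤ C * μH[(k : ℝ)] c := by
  classical
  set E := EuclideanSpace ℝ (Fin n) with hE
  set B : Set E := Metric.ball (0 : E) (1/2) with hB
  set CL : ℕ → ℝ≥0∞ := fun j => ((4 * (2:ℝ≥0)^(j+1) : ℝ≥0) : ℝ≥0∞)^k with hCL
  set S : ℝ≥0∞ := ∑' j : ℕ, CL j * ENNReal.ofReal ((2 * (1/2:ℝ)^j)^n) with hS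
  set V : ℝ≥0∞ := volume (Metric.ball (0 : E) 1) with hV
  have hSfin : S ≠ ⊤ := by
    have hterm : ∀ j : ℕ, CL j * ENNReal.ofReal ((2 * (1/2:ℝ)^j)^n)
        = (2:ℝ≥0∞)^(3*k+n) * (((2:ℝ≥0∞)⁻¹)^(n-k))^j := by
      intro j
      have h1 : ((4 * (2:ℝ≥0)^(j+1) : ℝ≥0) : ℝ≥0∞) = (2:ℝ≥0∞)^(j+3) := by
        push_cast
        rw [show (4:ℝ≥0∞) = 2^2 by norm_num, ← pow_add]
        ring
      have h2 : ENNReal.ofReal ((2 * (1/2:ℝ)^j)^n) = ((2:ℝ≥0∞) * ((2:ℝ≥0∞)⁻¹)^j)^n := by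
        rw [ENNReal.ofReal_pow (by positivity), ENNReal.ofReal_mul (by norm_num),
          ENNReal.ofReal_pow (by norm_num),
          show ENNReal.ofReal (1/2:ℝ) = 2⁻¹ by
            rw [ENNReal.ofReal_div_of_pos (by norm_num)]; norm_num]
        norm_num
      rw [hCL]
      simp only []
      rw [h1, h2, ← pow_mul, mul_pow, ← pow_mul, ← pow_mul]
      have hone : (2:ℝ≥0∞)^(j*k) * (2:ℝ≥0∞)⁻¹^(j*k) = 1 := by
        rw [← mul_pow, ENNReal.mul_inv_cancel (by norm_num) (by norm_num), one_pow]
      have hjk : (j+3)*k = j*k + 3*k := by ring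
      have hjn : j*n = j*k + (n-k)*j := by
        rw [Nat.sub_mul]
        have h3 : k*j ≤ n*j := Nat.mul_le_mul_right j hk.le
        have h4 : j*k = k*j := Nat.mul_comm j k
        have h5 : j*n = n*j := Nat.mul_comm j n
        omega
      rw [hjk, hjn]
      calc (2:ℝ≥0∞)^(j*k+3*k) * ((2:ℝ≥0∞)^n * (2:ℝ≥0∞)⁻¹^(j*k+(n-k)*j))
          = ((2:ℝ≥0∞)^(j*k) * (2:ℝ≥0∞)⁻¹^(j*k)) *
            ((2:ℝ≥0∞)^(3*k) * (2:ℝ≥0∞)^n * (2:ℝ≥0∞)⁻¹^((n-k)*j)) := by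
            rw [pow_add, pow_add]; ring
        _ = (2:ℝ≥0∞)^(3*k+n) * (2:ℝ≥0∞)⁻¹^((n-k)*j) := by
            rw [hone, one_mul, pow_add]
    have hx : (((2:ℝ≥0∞)⁻¹)^(n-k)) < 1 := by
      apply pow_lt_one₀ zero_le (by norm_num) (by omega)
    rw [hS]
    simp only [hterm]
    rw [ENNReal.tsum_mul_left, ENNReal.tsum_geometric]
    exact ENNReal.mul_ne_top (by simp) (ENNReal.inv_ne_top.2 (tsub_pos_of_lt hx).ne')
  refine ⟨volume B + S * V, ?_, ?_⟩
  · exact ENNReal.add_ne_top.2 ⟨(measure_ball_lt_top).ne,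
      ENNReal.mul_ne_top hSfin (measure_ball_lt_top).ne⟩
  · intro c hc hcB
    by_cases hfin : μH[(k:ℝ)] c = ⊤
    · rw [hfin, ENNReal.mul_top]
      · exact le_top
      · intro h0
        have hvb : (0:ℝ≥0∞) < volume B := measure_ball_pos _ _ (by norm_num)
        rw [add_eq_zero] at h0
        exact hvb.ne' h0.1
    set ρ : Measure E := (μH[(k:ℝ)] : Measure E).restrict c with hρ
    haveI : IsFiniteMeasure ρ := ⟨by
      rw [hρ, Measure.restrict_apply_univ]
      exact lt_top_iff_ne_top.2 hfin⟩
    -- the covering of `c` by annuli around `p`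
    have hcover : ∀ p ∈ B, ∀ x ∈ c, x ≠ p → ∃ j : ℕ, x ∈ annulus j p := by
      intro p hp x hx hxp
      have hd0 : 0 < dist x p := dist_pos.2 hxp
      have hd2 : dist x p < 2 := by
        have h1 : dist x 0 ≤ 1 := mem_closedBall.1 (hcB hx)
        have h2 : dist (0:E) p < 1/2 := by
          rw [dist_comm]
          exact mem_ball.1 hp
        calc dist x p ≤ dist x 0 + dist (0:E) p := dist_triangle _ _ _
          _ < 2 := by linarith
      have hex : ∃ j : ℕ, (1/2:ℝ)^j ≤ dist x p := by
        obtain ⟨j, hj⟩ := exists_pow_lt_of_lt_one hd0 (by norm_num : (1/2:ℝ) < 1)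
        exact ⟨j, hj.le⟩
      refine ⟨Nat.find hex, Nat.find_spec hex, ?_⟩
      rcases Nat.eq_zero_or_pos (Nat.find hex) with h0 | hpos
      · rw [h0]
        simpa using hd2
      · obtain ⟨m, hm⟩ := Nat.exists_eq_add_of_lt hpos
        rw [zero_add] at hm
        have hmin := Nat.find_min hex (m := m) (by omega)
        push_neg at hmin
        rw [hm]
        calc dist x p < (1/2:ℝ)^m := hmin
          _ = 2 * (1/2:ℝ)^(m+1) := by rw [pow_succ]; ring
    -- pointwise bound on the measure of the image
    have hpoint : ∀ p ∈ B, μH[(k:ℝ)] ((fun x => rayProj p x) '' c) ≤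
        c.indicator (fun _ => μH[(k:ℝ)] c) p + ∑' j : ℕ, CL j * ρ (annulus j p) := by
      intro p hp
      have hpn : ‖p‖ ≤ 1/2 := le_of_lt (mem_ball_zero_iff.1 hp)
      have hsub : (fun x => rayProj p x) '' c ⊆
          (rayProj p '' (c ∩ {p})) ∪ ⋃ j : ℕ, rayProj p '' (c ∩ annulus j p) := by
        rintro y ⟨x, hx, rfl⟩
        by_cases hxp : x = p
        · exact Or.inl ⟨x, ⟨hx, by simp [hxp]⟩, rfl⟩
        · obtain ⟨j, hj⟩ := hcover p hp x hx hxp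
          exact Or.inr (mem_iUnion.2 ⟨j, ⟨x, ⟨hx, hj⟩, rfl⟩⟩)
      refine le_trans (measure_mono hsub) (le_trans (measure_union_le _ _) (add_le_add ?_ ?_))
      · -- singleton part
        by_cases hpc : p ∈ c
        · have he : c ∩ {p} = {p} := inter_eq_self_of_subset_right (singleton_subset_iff.2 hpc)
          rw [he, image_singleton, indicator_of_mem hpc]
          rcases Nat.eq_zero_or_pos k with hk0 | hkpos
          · subst hk0
            simp only [Nat.cast_zero]
            exact le_trans
              (Measure.hausdorffMeasure_le_one_of_subsingleton subsingleton_singleton le_rfl)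
              (Measure.one_le_hausdorffMeasure_zero_of_nonempty ⟨p, hpc⟩)
          · haveI := MeasureTheory.Measure.noAtoms_hausdorff E
              (show (0:ℝ) < (k:ℝ) by exact_mod_cast hkpos)
            rw [measure_singleton]
            exact zero_le
        · simp [inter_singleton_eq_empty.2 hpc]
      · -- annuli part
        refine le_trans (measure_iUnion_le _) (ENNReal.tsum_le_tsum fun j => ?_)
        calc μH[(k:ℝ)] (rayProj p '' (c ∩ annulus j p))
            ≤ CL j * μH[(k:ℝ)] (c ∩ annulus j p) := image_annulus_le hpn c j
          _ = CL j * ρ (annulus j p) := by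
              rw [hρ, Measure.restrict_apply (measurableSet_annulus j p), inter_comm]
    -- indicator representation of the kernel
    have hrep : ∀ j : ℕ, (fun p : E => ρ (annulus j p)) = fun p : E =>
        ∫⁻ x, ({q : E × E | q.2 ∈ annulus j q.1}).indicator (fun _ => (1:ℝ≥0∞)) (p, x) ∂ρ := by
      intro j
      funext p
      rw [← lintegral_indicator_one (measurableSet_annulus j p)]
      congr 1
    have hunc : ∀ j : ℕ, Measurable (Function.uncurry fun (p x : E) =>
        ({q : E × E | q.2 ∈ annulus j q.1}).indicator (fun _ => (1:ℝ≥0∞)) (p, x)) := by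
      intro j
      have heq : (Function.uncurry fun (p x : E) =>
          ({q : E × E | q.2 ∈ annulus j q.1}).indicator (fun _ => (1:ℝ≥0∞)) (p, x)) =
          ({q : E × E | q.2 ∈ annulus j q.1}).indicator (fun _ => (1:ℝ≥0∞)) := by
        funext q
        rfl
      rw [heq]
      exact measurable_const.indicator (measurableSet_annulus_prod j)
    have hker : ∀ j : ℕ, Measurable fun p : E => ρ (annulus j p) := by
      intro j
      rw [hrep j]
      exact (hunc j).lintegral_prod_right
    -- the Fubini bound for each annulus
    have hswap : ∀ j : ℕ, ∫⁻ p in B, ρ (annulus j p) ≤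
        ENNReal.ofReal ((2 * (1/2:ℝ)^j)^n) * V * μH[(k:ℝ)] c := by
      intro j
      have hT : ∀ x : E, MeasurableSet {p : E | (1/2:ℝ)^j ≤ dist x p ∧ dist x p < 2 * (1/2:ℝ)^j} := by
        intro x
        have h : {p : E | (1/2:ℝ)^j ≤ dist x p ∧ dist x p < 2 * (1/2:ℝ)^j}
            = (fun p => dist x p) ⁻¹' (Ico ((1/2:ℝ)^j) (2 * (1/2:ℝ)^j)) := by
          ext p
          simp [mem_Ico]
        rw [h]
        exact (Continuous.dist continuous_const continuous_id).measurable measurableSet_Ico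
      calc ∫⁻ p in B, ρ (annulus j p)
          = ∫⁻ p in B, ∫⁻ x, ({q : E × E | q.2 ∈ annulus j q.1}).indicator
              (fun _ => (1:ℝ≥0∞)) (p, x) ∂ρ := by rw [hrep j]
        _ = ∫⁻ x, (∫⁻ p in B, ({q : E × E | q.2 ∈ annulus j q.1}).indicator
              (fun _ => (1:ℝ≥0∞)) (p, x)) ∂ρ :=
            lintegral_lintegral_swap (hunc j).aemeasurable
        _ ≤ ∫⁻ x, volume (closedBall x (2 * (1/2:ℝ)^j)) ∂ρ := by
            apply lintegral_mono
            intro x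
            show (∫⁻ p in B, ({q : E × E | q.2 ∈ annulus j q.1}).indicator
              (fun _ => (1:ℝ≥0∞)) (p, x)) ≤ volume (closedBall x (2 * (1/2:ℝ)^j))
            have heq2 : (fun p : E => ({q : E × E | q.2 ∈ annulus j q.1}).indicator
                (fun _ => (1:ℝ≥0∞)) (p, x)) =
                ({p : E | (1/2:ℝ)^j ≤ dist x p ∧ dist x p < 2 * (1/2:ℝ)^j}).indicator
                (fun _ => (1:ℝ≥0∞)) := by
              funext p
              simp [Set.indicator_apply, annulus, Set.mem_setOf_eq]
              exact if_congr Iff.rfl rfl rfl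
            rw [heq2]
            refine le_trans (le_of_eq (lintegral_indicator_one (hT x))) ?_
            rw [Measure.restrict_apply (hT x)]
            refine le_trans (measure_mono ?_) (le_refl (volume (closedBall x (2 * (1/2:ℝ)^j))))
            intro p hp
            rcases hp with ⟨⟨_, h2⟩, _⟩
            rw [mem_closedBall, dist_comm]
            exact h2.le
        _ = volume (closedBall (0:E) (2 * (1/2:ℝ)^j)) * μH[(k:ℝ)] c := by
            simp_rw [Measure.addHaar_closedBall_center]
            rw [lintegral_const, hρ, Measure.restrict_apply_univ]
        _ ≤ ENNReal.ofReal ((2 * (1/2:ℝ)^j)^n) * V * μH[(k:ℝ)] c := by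
            rw [Measure.addHaar_closedBall volume (0:E) (by positivity),
              finrank_euclideanSpace_fin]
    -- put everything together
    calc ∫⁻ p in B, μH[(k:ℝ)] ((fun x => rayProj p x) '' c)
        ≤ ∫⁻ p in B, (c.indicator (fun _ => μH[(k:ℝ)] c) p +
            ∑' j : ℕ, CL j * ρ (annulus j p)) := by
          refine setLIntegral_mono ?_ hpoint
          exact (measurable_const.indicator hc).add
            (Measurable.ennreal_tsum fun j => (hker j).const_mul _)
      _ = (∫⁻ p in B, c.indicator (fun _ => μH[(k:ℝ)] c) p) +
            ∫⁻ p in B, ∑' j : ℕ, CL j * ρ (annulus j p) :=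
          lintegral_add_left (measurable_const.indicator hc) _
      _ ≤ volume B * μH[(k:ℝ)] c +
            ∑' j : ℕ, CL j * (ENNReal.ofReal ((2 * (1/2:ℝ)^j)^n) * V * μH[(k:ℝ)] c) := by
          refine add_le_add ?_ ?_
          · rw [lintegral_indicator hc, setLIntegral_const]
            rw [Measure.restrict_apply hc]
            calc μH[(k:ℝ)] c * volume (c ∩ B) ≤ μH[(k:ℝ)] c * volume B :=
                mul_le_mul_right (measure_mono inter_subset_right) _
              _ = volume B * μH[(k:ℝ)] c := mul_comm _ _
          · rw [lintegral_tsum fun j => ((hker j).const_mul _).aemeasurable]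
            refine ENNReal.tsum_le_tsum fun j => ?_
            rw [lintegral_const_mul _ (hker j)]
            exact mul_le_mul_right (hswap j) _
      _ = (volume B + S * V) * μH[(k:ℝ)] c := by
          rw [add_mul]
          congr 1
          have h1 : ∀ j : ℕ, CL j * (ENNReal.ofReal ((2 * (1/2:ℝ)^j)^n) * V * μH[(k:ℝ)] c)
              = (CL j * ENNReal.ofReal ((2 * (1/2:ℝ)^j)^n)) * (V * μH[(k:ℝ)] c) := by
            intro j
            ring
          simp_rw [h1]
          rw [ENNReal.tsum_mul_right, hS]
          ring
end

section
/- Let σ be a k-dimensional simplex of area dA contained in the unit ball B^n, and let x ∈ B^n be a point at distance r from σ with r > 0 and at distance at least 1/2 from ∂B^n. Then the area of the radial shadow of σ on S^{n−1} cast by rays from x through points of σ is at most C(n,k)·dA/r^k for a constant C(n,k). -/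
open MeasureTheory ENNReal
open scoped Classical
open scoped RealInnerProductSpace NNReal

noncomputable def sOf {n : ℕ} (x e : EuclideanSpace ℝ (Fin n)) : ℝ :=
  -⟪x, e⟫ + Real.sqrt (⟪x, e⟫ ^ 2 + 1 - ‖x‖ ^ 2)

lemma sOf_basic {n : ℕ} {x e : EuclideanSpace ℝ (Fin n)} (hx : ‖x‖ ≤ 1/2) (he : ‖e‖ = 1) :
    0 ≤ sOf x e ∧ sOf x e ≤ 2 ∧ ‖x + sOf x e • e‖ = 1 := by
  set b := ⟪x, e⟫ with hb
  have hbabs : |b| ≤ 1/2 := by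
    calc |b| ≤ ‖x‖ * ‖e‖ := abs_real_inner_le_norm x e
    _ ≤ 1/2 := by rw [he]; simpa using hx
  have hb1 : -(1/2) ≤ b := neg_le_of_abs_le hbabs
  have hb2 : b ≤ 1/2 := le_of_abs_le hbabs
  have hxnn : (0:ℝ) ≤ ‖x‖ := norm_nonneg x
  have hD : (3/4 : ℝ) ≤ b^2 + 1 - ‖x‖^2 := by nlinarith [sq_nonneg b]
  have hD2 : b^2 + 1 - ‖x‖^2 ≤ 5/4 := by nlinarith [sq_nonneg ‖x‖]
  set D := b^2 + 1 - ‖x‖^2 with hDdef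
  have hsq : Real.sqrt D ^ 2 = D := Real.sq_sqrt (by linarith)
  have hs0 : (0:ℝ) ≤ Real.sqrt D := Real.sqrt_nonneg D
  have hsge : (1/2 : ℝ) ≤ Real.sqrt D := by nlinarith
  have hsle : Real.sqrt D ≤ 3/2 := by nlinarith
  have hs : sOf x e = -b + Real.sqrt D := rfl
  refine ⟨by rw [hs]; linarith, by rw [hs]; linarith, ?_⟩
  have hnorm2 : ‖x + sOf x e • e‖^2 = 1 := by
    rw [norm_add_sq_real, real_inner_smul_right, norm_smul, Real.norm_eq_abs, he,
      mul_pow, sq_abs, hs]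
    nlinarith
  rw [← Real.sqrt_sq (norm_nonneg _), hnorm2, Real.sqrt_one]

lemma eq_sOf {n : ℕ} {x e : EuclideanSpace ℝ (Fin n)} (hx : ‖x‖ ≤ 1/2) (he : ‖e‖ = 1)
    {m : ℝ} (hm : 0 < m) (h1 : ‖x + m • e‖ = 1) : m = sOf x e := by
  set b := ⟪x, e⟫ with hb
  have hbabs : |b| ≤ 1/2 := by
    calc |b| ≤ ‖x‖ * ‖e‖ := abs_real_inner_le_norm x e
    _ ≤ 1/2 := by rw [he]; simpa using hx
  have hb1 : -(1/2) ≤ b := neg_le_of_abs_le hbabs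
  have hxnn : (0:ℝ) ≤ ‖x‖ := norm_nonneg x
  have hD : (3/4 : ℝ) ≤ b^2 + 1 - ‖x‖^2 := by nlinarith [sq_nonneg b]
  set D := b^2 + 1 - ‖x‖^2 with hDdef
  have hnorm2 : ‖x + m • e‖^2 = 1 := by rw [h1]; norm_num
  rw [norm_add_sq_real, real_inner_smul_right, norm_smul, Real.norm_eq_abs, he,
    mul_pow, sq_abs] at hnorm2
  have h3 : (m + b)^2 = D := by nlinarith
  have h4 : 0 ≤ m + b := by nlinarith
  have h5 : Real.sqrt D = m + b := by rw [← h3, Real.sqrt_sq h4]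
  have : sOf x e = -b + Real.sqrt D := rfl
  rw [this, h5]; ring

noncomputable def gmap {n : ℕ} (x y : EuclideanSpace ℝ (Fin n)) : EuclideanSpace ℝ (Fin n) :=
  x + sOf x (‖y - x‖⁻¹ • (y - x)) • (‖y - x‖⁻¹ • (y - x))
private lemma dummy_sep : True := trivial

lemma rayProj_eq {n : ℕ} {x y : EuclideanSpace ℝ (Fin n)} (hx : ‖x‖ ≤ 1/2) (hy : ‖y‖ ≤ 1)
    (hne : y ≠ x) : rayProj y x = gmap x y := by
  set d := y - x with hd
  have hm : 0 < ‖d‖ := by simpa [hd, sub_eq_zero] using hne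
  set m := ‖d‖ with hmdef
  set e : EuclideanSpace ℝ (Fin n) := m⁻¹ • d with he
  have hee : ‖e‖ = 1 := by
    rw [he, norm_smul, Real.norm_eq_abs, abs_inv, abs_of_pos hm]
    field_simp
    exact hmdef.symm
  have hme : m • e = d := by rw [he, smul_smul]; field_simp; exact one_smul _ _
  obtain ⟨hs0, hs2, hsnorm⟩ := sOf_basic hx hee
  set s := sOf x e with hs
  -- m ≤ s
  have hym : x + m • e = y := by rw [hme, hd]; abel
  have hyle : ‖x + m • e‖ ≤ 1 := by rw [hym]; exact hy
  have hmles : m ≤ s := by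
    set b := ⟪x, e⟫ with hb
    have hbabs : |b| ≤ 1/2 := by
      calc |b| ≤ ‖x‖ * ‖e‖ := abs_real_inner_le_norm x e
      _ ≤ 1/2 := by rw [hee]; simpa using hx
    have h1 : ‖x + m • e‖^2 ≤ 1 := by nlinarith [norm_nonneg (x + m • e)]
    rw [norm_add_sq_real, real_inner_smul_right, norm_smul, Real.norm_eq_abs, hee, mul_pow, sq_abs] at h1
    rw [← hb] at h1
    have hDpos : (0:ℝ) ≤ b^2 + 1 - ‖x‖^2 := by nlinarith [sq_nonneg b, norm_nonneg x]
    have hmb : (m + b)^2 ≤ b^2 + 1 - ‖x‖^2 := by nlinarith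
    have h2 : m + b ≤ Real.sqrt (b^2 + 1 - ‖x‖^2) := by
      calc m + b ≤ |m + b| := le_abs_self _
      _ = Real.sqrt ((m+b)^2) := (Real.sqrt_sq_eq_abs _).symm
      _ ≤ Real.sqrt (b^2 + 1 - ‖x‖^2) := Real.sqrt_le_sqrt hmb
    have hsd : s = -b + Real.sqrt (b^2 + 1 - ‖x‖^2) := rfl
    rw [hsd]
    linarith
  have hex : ∃ t : ℝ, 1 ≤ t ∧ ‖x + t • (y - x)‖ = 1 := by
    refine ⟨s / m, (one_le_div hm).mpr hmles, ?_⟩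
    have : (s / m) • (y - x) = s • e := by
      rw [← hd, he, smul_smul, div_eq_mul_inv]
    rw [this, hsnorm]
  rw [rayProj, dif_pos hex]
  obtain ⟨ht1, htn⟩ := hex.choose_spec
  set t := hex.choose with ht
  have htd : t • (y - x) = (t * m) • e := by
    rw [← hd, he, smul_smul, mul_inv_cancel_right₀ hm.ne']
  have htm : 0 < t * m := by positivity
  have : t * m = s := by
    apply eq_sOf hx hee htm
    rw [← htd]; exact htn
  rw [gmap, ← hd, ← he, ← hs, htd, this]

set_option maxHeartbeats 1000000 in
lemma sOf_lip {n : ℕ} {x e₁ e₂ : EuclideanSpace ℝ (Fin n)} (hx : ‖x‖ ≤ 1/2)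
    (he₁ : ‖e₁‖ = 1) (he₂ : ‖e₂‖ = 1) : |sOf x e₁ - sOf x e₂| ≤ ‖e₁ - e₂‖ := by
  set b₁ := ⟪x, e₁⟫ with hb₁
  set b₂ := ⟪x, e₂⟫ with hb₂
  have hbabs₁ : |b₁| ≤ 1/2 := by
    calc |b₁| ≤ ‖x‖ * ‖e₁‖ := abs_real_inner_le_norm x e₁
    _ ≤ 1/2 := by rw [he₁]; simpa using hx
  have hbabs₂ : |b₂| ≤ 1/2 := by
    calc |b₂| ≤ ‖x‖ * ‖e₂‖ := abs_real_inner_le_norm x e₂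
    _ ≤ 1/2 := by rw [he₂]; simpa using hx
  have hdiff : |b₁ - b₂| ≤ (1/2) * ‖e₁ - e₂‖ := by
    have : b₁ - b₂ = ⟪x, e₁ - e₂⟫ := by rw [inner_sub_right]
    rw [this]
    calc |⟪x, e₁ - e₂⟫| ≤ ‖x‖ * ‖e₁ - e₂‖ := abs_real_inner_le_norm _ _
    _ ≤ (1/2) * ‖e₁ - e₂‖ := by
        apply mul_le_mul_of_nonneg_right hx (norm_nonneg _)
  have hxsq : ‖x‖^2 ≤ 1/4 := by nlinarith [norm_nonneg x]
  have hD₁ : (3/4:ℝ) ≤ b₁^2 + 1 - ‖x‖^2 := by nlinarith [sq_nonneg b₁]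
  have hD₂ : (3/4:ℝ) ≤ b₂^2 + 1 - ‖x‖^2 := by nlinarith [sq_nonneg b₂]
  set t₁ := Real.sqrt (b₁^2 + 1 - ‖x‖^2) with ht₁
  set t₂ := Real.sqrt (b₂^2 + 1 - ‖x‖^2) with ht₂
  have hsq₁ : t₁^2 = b₁^2 + 1 - ‖x‖^2 := Real.sq_sqrt (by linarith)
  have hsq₂ : t₂^2 = b₂^2 + 1 - ‖x‖^2 := Real.sq_sqrt (by linarith)
  have ht₁0 : 0 ≤ t₁ := Real.sqrt_nonneg _
  have ht₂0 : 0 ≤ t₂ := Real.sqrt_nonneg _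
  have hge₁ : (1/2:ℝ) ≤ t₁ := by nlinarith
  have hge₂ : (1/2:ℝ) ≤ t₂ := by nlinarith
  have heq : (t₁ - t₂) * (t₁ + t₂) = (b₁ - b₂) * (b₁ + b₂) := by linear_combination hsq₁ - hsq₂
  have hb₁' := abs_le.mp hbabs₁
  have hb₂' := abs_le.mp hbabs₂
  have hd' := abs_le.mp hdiff
  have hnn : (0:ℝ) ≤ ‖e₁ - e₂‖ := norm_nonneg _
  have hsum : (1:ℝ) ≤ t₁ + t₂ := by linarith
  have h5 : |t₁ - t₂| * (t₁ + t₂) = |b₁ - b₂| * |b₁ + b₂| := by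
    rw [← abs_of_nonneg (show (0:ℝ) ≤ t₁ + t₂ by linarith), ← abs_mul, heq, abs_mul]
  have h7 : |b₁ + b₂| ≤ 1 := abs_le.mpr ⟨by linarith, by linarith⟩
  have h6 : |t₁ - t₂| ≤ (1/2) * ‖e₁ - e₂‖ := by
    calc |t₁ - t₂| = |t₁ - t₂| * 1 := (mul_one _).symm
      _ ≤ |t₁ - t₂| * (t₁ + t₂) := by gcongr
      _ = |b₁ - b₂| * |b₁ + b₂| := h5
      _ ≤ ((1/2) * ‖e₁ - e₂‖) * 1 := by
          apply mul_le_mul hdiff h7 (abs_nonneg _) (by linarith)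
      _ = (1/2) * ‖e₁ - e₂‖ := mul_one _
  have hs₁ : sOf x e₁ = -b₁ + t₁ := rfl
  have hs₂ : sOf x e₂ = -b₂ + t₂ := rfl
  have harr : -b₁ + t₁ - (-b₂ + t₂) = (b₂ - b₁) + (t₁ - t₂) := by ring
  rw [hs₁, hs₂, harr]
  calc |(b₂ - b₁) + (t₁ - t₂)| ≤ |b₂ - b₁| + |t₁ - t₂| := abs_add_le _ _
    _ = |b₁ - b₂| + |t₁ - t₂| := by rw [abs_sub_comm]
    _ ≤ (1/2) * ‖e₁ - e₂‖ + (1/2) * ‖e₁ - e₂‖ := add_le_add hdiff h6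
    _ = ‖e₁ - e₂‖ := by ring

lemma unit_lip {n : ℕ} {a b : EuclideanSpace ℝ (Fin n)} {r : ℝ} (hr : 0 < r)
    (ha : r ≤ ‖a‖) (hb : r ≤ ‖b‖) :
    ‖‖a‖⁻¹ • a - ‖b‖⁻¹ • b‖ ≤ (2 / r) * ‖a - b‖ := by
  have hA : 0 < ‖a‖ := lt_of_lt_of_le hr ha
  have hB : 0 < ‖b‖ := lt_of_lt_of_le hr hb
  have key : ‖a‖⁻¹ • a - ‖b‖⁻¹ • b = ‖a‖⁻¹ • (a - b) + (‖a‖⁻¹ - ‖b‖⁻¹) • b := by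
    rw [smul_sub, sub_smul]; abel
  rw [key]
  have h1 : ‖‖a‖⁻¹ • (a - b)‖ = ‖a‖⁻¹ * ‖a - b‖ := by
    rw [norm_smul, Real.norm_eq_abs, abs_of_pos (inv_pos.mpr hA)]
  have h2 : ‖(‖a‖⁻¹ - ‖b‖⁻¹) • b‖ = |‖a‖⁻¹ - ‖b‖⁻¹| * ‖b‖ := by
    rw [norm_smul, Real.norm_eq_abs]
  have h3 : |‖a‖⁻¹ - ‖b‖⁻¹| * ‖b‖ = |‖b‖ - ‖a‖| / ‖a‖ := by
    have e1 : ‖a‖⁻¹ - ‖b‖⁻¹ = (‖b‖ - ‖a‖) / (‖a‖ * ‖b‖) := by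
      field_simp
    rw [e1, abs_div, abs_of_pos (mul_pos hA hB)]
    field_simp
  have h4 : |‖b‖ - ‖a‖| ≤ ‖a - b‖ := by
    rw [abs_sub_comm]
    exact abs_norm_sub_norm_le a b
  calc ‖‖a‖⁻¹ • (a - b) + (‖a‖⁻¹ - ‖b‖⁻¹) • b‖
      ≤ ‖‖a‖⁻¹ • (a - b)‖ + ‖(‖a‖⁻¹ - ‖b‖⁻¹) • b‖ := norm_add_le _ _
    _ = ‖a‖⁻¹ * ‖a - b‖ + |‖b‖ - ‖a‖| / ‖a‖ := by rw [h1, h2, h3]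
    _ ≤ ‖a‖⁻¹ * ‖a - b‖ + ‖a - b‖ / ‖a‖ := by gcongr
    _ = 2 / ‖a‖ * ‖a - b‖ := by field_simp; ring
    _ ≤ 2 / r * ‖a - b‖ := by gcongr

lemma gmap_lip {n : ℕ} {x y₁ y₂ : EuclideanSpace ℝ (Fin n)} {r : ℝ} (hx : ‖x‖ ≤ 1/2)
    (hr : 0 < r) (h₁ : r ≤ ‖y₁ - x‖) (h₂ : r ≤ ‖y₂ - x‖) :
    ‖gmap x y₁ - gmap x y₂‖ ≤ (6 / r) * ‖y₁ - y₂‖ := by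
  set e₁ : EuclideanSpace ℝ (Fin n) := ‖y₁ - x‖⁻¹ • (y₁ - x) with he₁def
  set e₂ : EuclideanSpace ℝ (Fin n) := ‖y₂ - x‖⁻¹ • (y₂ - x) with he₂def
  have hm₁ : 0 < ‖y₁ - x‖ := lt_of_lt_of_le hr h₁
  have hm₂ : 0 < ‖y₂ - x‖ := lt_of_lt_of_le hr h₂
  have hee₁ : ‖e₁‖ = 1 := by
    rw [he₁def, norm_smul, Real.norm_eq_abs, abs_inv, abs_of_pos hm₁]; field_simp
  have hee₂ : ‖e₂‖ = 1 := by
    rw [he₂def, norm_smul, Real.norm_eq_abs, abs_inv, abs_of_pos hm₂]; field_simp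
  obtain ⟨hs₁0, hs₁2, -⟩ := sOf_basic hx hee₁
  obtain ⟨hs₂0, hs₂2, -⟩ := sOf_basic hx hee₂
  have hslip := sOf_lip hx hee₁ hee₂
  have helip : ‖e₁ - e₂‖ ≤ (2 / r) * ‖y₁ - y₂‖ := by
    have := unit_lip hr h₁ h₂
    rw [← he₁def, ← he₂def] at this
    have heq : y₁ - x - (y₂ - x) = y₁ - y₂ := by abel
    rwa [heq] at this
  have hgd : gmap x y₁ - gmap x y₂ = sOf x e₁ • (e₁ - e₂) + (sOf x e₁ - sOf x e₂) • e₂ := by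
    rw [gmap, gmap, ← he₁def, ← he₂def, smul_sub, sub_smul]; abel
  rw [hgd]
  have hb1 : ‖sOf x e₁ • (e₁ - e₂)‖ ≤ 2 * ‖e₁ - e₂‖ := by
    rw [norm_smul, Real.norm_eq_abs, abs_of_nonneg hs₁0]
    exact mul_le_mul_of_nonneg_right hs₁2 (norm_nonneg _)
  have hb2 : ‖(sOf x e₁ - sOf x e₂) • e₂‖ ≤ ‖e₁ - e₂‖ := by
    rw [norm_smul, Real.norm_eq_abs, hee₂, mul_one]
    exact hslip
  calc ‖sOf x e₁ • (e₁ - e₂) + (sOf x e₁ - sOf x e₂) • e₂‖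
      ≤ ‖sOf x e₁ • (e₁ - e₂)‖ + ‖(sOf x e₁ - sOf x e₂) • e₂‖ := norm_add_le _ _
    _ ≤ 2 * ‖e₁ - e₂‖ + ‖e₁ - e₂‖ := by linarith
    _ = 3 * ‖e₁ - e₂‖ := by ring
    _ ≤ 3 * ((2 / r) * ‖y₁ - y₂‖) := by linarith
    _ = (6 / r) * ‖y₁ - y₂‖ := by ring

/-- The radial shadow on the unit sphere of a `k`-simplex `σ` in the unit ball,
cast by rays from a point `x` at distance `r > 0` from `σ` and at distance at least
`1/2` from the boundary sphere, has `k`-area at most `C(n,k) · area(σ) / r^k`. -/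
theorem stmt_13 (n k : ℕ) (hk : k ≤ n) :
    ∃ C : ℝ, 0 < C ∧
      ∀ (v : Fin (k + 1) → EuclideanSpace ℝ (Fin n))
        (x : EuclideanSpace ℝ (Fin n)) (r : ℝ),
        (∀ i, v i ∈ Metric.closedBall (0 : EuclideanSpace ℝ (Fin n)) 1) →
        x ∈ Metric.closedBall (0 : EuclideanSpace ℝ (Fin n)) (1 / 2) →
        0 < r → Metric.infDist x (convexHull ℝ (Set.range v)) = r →
        μH[(k : ℝ)] ((fun y => rayProj y x) '' convexHull ℝ (Set.range v)) *
            ENNReal.ofReal (r ^ k) ≤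
          ENNReal.ofReal C * μH[(k : ℝ)] (convexHull ℝ (Set.range v)) := by
  refine ⟨(6:ℝ)^k, by positivity, ?_⟩
  intro v x r hv hx hr hinf
  set σ := convexHull ℝ (Set.range v) with hσ
  have hx' : ‖x‖ ≤ 1/2 := by
    simpa [Metric.mem_closedBall, dist_zero_right] using hx
  have hσball : σ ⊆ Metric.closedBall (0 : EuclideanSpace ℝ (Fin n)) 1 := by
    apply convexHull_min _ (convex_closedBall _ _)
    rintro y ⟨i, rfl⟩
    exact hv i
  have hσ1 : ∀ y ∈ σ, ‖y‖ ≤ 1 := fun y hy => by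
    simpa [Metric.mem_closedBall, dist_zero_right] using hσball hy
  have hσ2 : ∀ y ∈ σ, r ≤ ‖y - x‖ := fun y hy => by
    have h := Metric.infDist_le_dist_of_mem (x := x) hy
    rw [hinf] at h
    rwa [dist_eq_norm, norm_sub_rev] at h
  have himg : (fun y => rayProj y x) '' σ = gmap x '' σ := by
    apply Set.image_congr
    intro y hy
    apply rayProj_eq hx' (hσ1 y hy)
    intro hyx
    have h := hσ2 y hy
    rw [hyx, sub_self, norm_zero] at h
    linarith
  have hlip : LipschitzOnWith (Real.toNNReal (6/r)) (gmap x) σ := by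
    apply LipschitzOnWith.of_dist_le_mul
    intro y₁ h₁ y₂ h₂
    rw [Real.coe_toNNReal _ (by positivity), dist_eq_norm, dist_eq_norm]
    exact gmap_lip hx' hr (hσ2 y₁ h₁) (hσ2 y₂ h₂)
  have hmeas := hlip.hausdorffMeasure_image_le (show (0:ℝ) ≤ (k:ℝ) by positivity)
  rw [himg]
  have hco : ((Real.toNNReal (6/r) : ℝ≥0) : ℝ≥0∞) = ENNReal.ofReal (6/r) := rfl
  have hpow : ((Real.toNNReal (6/r) : ℝ≥0) : ℝ≥0∞) ^ ((k:ℕ):ℝ) = ENNReal.ofReal ((6/r)^k) := by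
    rw [ENNReal.rpow_natCast, hco, ← ENNReal.ofReal_pow (by positivity)]
  rw [hpow] at hmeas
  calc μH[(k:ℝ)] (gmap x '' σ) * ENNReal.ofReal (r ^ k)
      ≤ (ENNReal.ofReal ((6/r)^k) * μH[(k:ℝ)] σ) * ENNReal.ofReal (r ^ k) := by
        exact mul_le_mul_left hmeas _
    _ = (ENNReal.ofReal ((6/r)^k) * ENNReal.ofReal (r ^ k)) * μH[(k:ℝ)] σ := by
        ring
    _ = ENNReal.ofReal ((6:ℝ)^k) * μH[(k:ℝ)] σ := by
        rw [← ENNReal.ofReal_mul (by positivity)]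
        congr 1
        rw [div_pow, div_mul_cancel₀]
        positivity
end
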